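/- arXiv:1910.00555 — 5 statements merged into one kernel-verified Lean document; each statement's English description precedes it below -/
import Mathlib

section
/- (Derivative identity for the composite adaptive barrier, Table I.) Let h_a : ℝⁿ × ℝᵖ → ℝ be continuously differentiable, f : ℝⁿ → ℝⁿ, F : ℝⁿ → ℝ^{n×p}, g : ℝⁿ → ℝ^{n×m} be continuous, Γ ∈ ℝ^{p×p} be symmetric positive definite, and θ⋆ ∈ ℝᵖ. Let x : ℝ → ℝⁿ, θ̂ : ℝ → ℝᵖ, and u : ℝ → ℝᵐ satisfy, for all t, ẋ(t) = f(x(t)) + F(x(t)) θ⋆ + g(x(t)) u(t) and θ̂̇(t) = Γ τ(t), where τ(t) = −( (∂h_a/∂x)(x(t),θ̂(t)) · F(x(t)) )ᵀ ∈ ℝᵖ. Define θ̃(t) = θ⋆ − θ̂(t) and h(t) = h_a(x(t), θ̂(t)) − (1/2) θ̃(t)ᵀ Γ⁻¹ θ̃(t). Then for all t, h is differentiable at t with ḣ(t) = (∂h_a/∂x)(x(t),θ̂(t)) · ( f(x(t)) + F(x(t)) · ( θ̂(t) − Γ ((∂h_a/∂θ)(x(t),θ̂(t)))ᵀ ) +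 g(x(t)) u(t) ). -/
open Matrix

lemma quad_hasDerivAt {p : ℕ} (A : Matrix (Fin p) (Fin p) ℝ)
    {v : ℝ → Fin p → ℝ} {v' : Fin p → ℝ} {t : ℝ} (hv : HasDerivAt v v' t) :
    HasDerivAt (fun s => v s ⬝ᵥ A.mulVec (v s))
      (v' ⬝ᵥ A.mulVec (v t) + v t ⬝ᵥ A.mulVec v') t := by
  have hvi : ∀ i, HasDerivAt (fun s => v s i) (v' i) t := fun i => hasDerivAt_pi.1 hv i
  have inner : ∀ i, HasDerivAt (fun s => (A.mulVec (v s)) i) ((A.mulVec v') i) t := by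
    intro i
    simp only [Matrix.mulVec, dotProduct]
    exact HasDerivAt.fun_sum (fun j _ => (hvi j).const_mul (A i j))
  have h := HasDerivAt.fun_sum (fun i (_ : i ∈ Finset.univ) => (hvi i).mul (inner i))
  simpa [dotProduct, Finset.sum_add_distrib] using h

lemma clm_mulVec {n p : ℕ} (L : (Fin n → ℝ) →L[ℝ] ℝ)
    (F : Matrix (Fin n) (Fin p) ℝ) (w : Fin p → ℝ) :
    ∑ i, w i * L (fun j => F j i) = L (F.mulVec w) := by
  have : F.mulVec w = ∑ i, w i • (fun j => F j i) := by
    ext j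
    simp [Matrix.mulVec, dotProduct, mul_comm]
  rw [this, map_sum]
  simp [mul_comm]

lemma clm_single {p : ℕ} (L : (Fin p → ℝ) →L[ℝ] ℝ) (w : Fin p → ℝ) :
    L w = ∑ i, w i * L (Pi.single i 1) := by
  have : w = ∑ i, w i • (Pi.single i 1 : Fin p → ℝ) := by
    ext j; simp [Pi.single_apply]
  conv_lhs => rw [this]
  rw [map_sum]; simp


/-- Table I derivative identity for the composite adaptive barrier
`h(t) = h_a(x(t),θ̂(t)) − (1/2) θ̃(t)ᵀ Γ⁻¹ θ̃(t)` along the closed-loop adaptive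
system with update law `τ = −((∂h_a/∂x) F(x))ᵀ`. -/
theorem composite_barrier_derivative_identity
    {n p m : ℕ}
    (ha : ((Fin n → ℝ) × (Fin p → ℝ)) → ℝ) (hha : ContDiff ℝ 1 ha)
    (f : (Fin n → ℝ) → (Fin n → ℝ)) (hf : Continuous f)
    (F : (Fin n → ℝ) → Matrix (Fin n) (Fin p) ℝ) (hF : Continuous F)
    (g : (Fin n → ℝ) → Matrix (Fin n) (Fin m) ℝ) (hg : Continuous g)
    (Γ : Matrix (Fin p) (Fin p) ℝ) (hΓ : Γ.PosDef)
    (θs : Fin p → ℝ)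
    (x : ℝ → (Fin n → ℝ)) (θh : ℝ → (Fin p → ℝ)) (u : ℝ → (Fin m → ℝ))
    -- the adaptation law τ(t) = −((∂h_a/∂x)(x(t),θ̂(t)) · F(x(t)))ᵀ
    (τ : ℝ → (Fin p → ℝ))
    (hτ : ∀ t, τ t = fun i =>
      -(fderiv ℝ (fun y => ha (y, θh t)) (x t)) (fun j => F (x t) j i))
    -- closed-loop dynamics ẋ = f(x) + F(x) θ⋆ + g(x) u
    (hx : ∀ t, HasDerivAt x
      (f (x t) + (F (x t)).mulVec θs + (g (x t)).mulVec (u t)) t)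
    -- parameter update θ̂̇ = Γ τ
    (hθh : ∀ t, HasDerivAt θh (Γ.mulVec (τ t)) t) :
    ∀ t, HasDerivAt
      (fun s => ha (x s, θh s)
        - (1 / 2) * ((θs - θh s) ⬝ᵥ Γ⁻¹.mulVec (θs - θh s)))
      ((fderiv ℝ (fun y => ha (y, θh t)) (x t))
        (f (x t)
          + (F (x t)).mulVec
              (θh t - Γ.mulVec (fun i =>
                (fderiv ℝ (fun θ => ha (x t, θ)) (θh t)) (Pi.single i 1)))
          + (g (x t)).mulVec (u t))) t := by
  intro t
  classical
  have hdiff : Differentiable ℝ ha := hha.differentiable one_ne_zero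
  set Lx := fderiv ℝ (fun y => ha (y, θh t)) (x t) with hLxdef
  set Lθ := fderiv ℝ (fun θ => ha (x t, θ)) (θh t) with hLθdef
  set φ := fderiv ℝ ha (x t, θh t) with hφdef
  have hφ : HasFDerivAt ha φ (x t, θh t) := (hdiff _).hasFDerivAt
  have hx1 : Lx = φ.comp (ContinuousLinearMap.inl ℝ (Fin n → ℝ) (Fin p → ℝ)) := by
    rw [hLxdef]
    exact (hφ.comp (x t) (hasFDerivAt_prodMk_left (x t) (θh t))).fderiv
  have hθ1 : Lθ = φ.comp (ContinuousLinearMap.inr ℝ (Fin n → ℝ) (Fin p → ℝ)) := by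
    rw [hLθdef]
    exact (hφ.comp (θh t) (hasFDerivAt_prodMk_right (x t) (θh t))).fderiv
  set w := Γ.mulVec (τ t) with hwdef
  -- symmetry facts
  have hsymm : Γᵀ = Γ := by simpa using hΓ.1.eq
  have hinvsymm : Γ⁻¹ᵀ = Γ⁻¹ := by rw [Matrix.transpose_nonsing_inv, hsymm]
  have flip : ∀ (A : Matrix (Fin p) (Fin p) ℝ), Aᵀ = A →
      ∀ a b : Fin p → ℝ, a ⬝ᵥ A.mulVec b = b ⬝ᵥ A.mulVec a := by
    intro A hA a b
    rw [Matrix.dotProduct_mulVec, ← Matrix.mulVec_transpose, hA, dotProduct_comm]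
  have hdet : IsUnit Γ.det := isUnit_iff_ne_zero.2 (ne_of_gt hΓ.det_pos)
  have hinvw : Γ⁻¹.mulVec w = τ t := by
    rw [hwdef, Matrix.mulVec_mulVec, Matrix.nonsing_inv_mul Γ hdet, Matrix.one_mulVec]
  -- key linearity trick
  have keytrick : ∀ z : Fin p → ℝ, z ⬝ᵥ τ t = -(Lx ((F (x t)).mulVec z)) := by
    intro z
    have hc := clm_mulVec Lx (F (x t)) z
    rw [hτ t]
    simp only [dotProduct, ← hLxdef, mul_neg]
    rw [Finset.sum_neg_distrib, hc]
  -- Lθ w in terms of Lx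
  have hLθw : Lθ w = -(Lx ((F (x t)).mulVec (Γ.mulVec (fun i => Lθ (Pi.single i 1))))) := by
    have h1' : Lθ w = w ⬝ᵥ (fun i => Lθ (Pi.single i 1)) := clm_single Lθ w
    rw [h1', hwdef, dotProduct_comm, flip Γ hsymm,
      dotProduct_comm (τ t), keytrick]
  -- derivative pieces
  have h1 : HasDerivAt (fun s => ha (x s, θh s))
      (φ (f (x t) + (F (x t)).mulVec θs + (g (x t)).mulVec (u t), w)) t :=
    hφ.comp_hasDerivAt t ((hx t).prodMk (hθh t))
  have hθtd : HasDerivAt (fun s => θs - θh s) (-w) t := (hθh t).const_sub θs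
  have hq := quad_hasDerivAt Γ⁻¹ hθtd
  have htotal := h1.sub (hq.const_mul ((1:ℝ)/2))
  have split : φ (f (x t) + (F (x t)).mulVec θs + (g (x t)).mulVec (u t), w)
      = Lx (f (x t) + (F (x t)).mulVec θs + (g (x t)).mulVec (u t)) + Lθ w := by
    rw [hx1, hθ1]
    simp only [ContinuousLinearMap.comp_apply, ContinuousLinearMap.inl_apply,
      ContinuousLinearMap.inr_apply, ← map_add, Prod.mk_add_mk, add_zero, zero_add]
  refine htotal.congr_deriv ?_
  rw [split]
  have e1 : (-w) ⬝ᵥ Γ⁻¹.mulVec (θs - θh t) = (θs - θh t) ⬝ᵥ Γ⁻¹.mulVec (-w) :=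
    flip _ hinvsymm _ _
  have e2 : (θs - θh t) ⬝ᵥ Γ⁻¹.mulVec (-w) = -((θs - θh t) ⬝ᵥ τ t) := by
    rw [Matrix.mulVec_neg, dotProduct_neg, hinvw]
  rw [e1, e2, keytrick (θs - θh t), hLθw]
  have harg : f (x t) + (F (x t)).mulVec (θh t - Γ.mulVec (fun i => Lθ (Pi.single i 1)))
        + (g (x t)).mulVec (u t)
      = (f (x t) + (F (x t)).mulVec θs + (g (x t)).mulVec (u t))
        - (F (x t)).mulVec (Γ.mulVec (fun i => Lθ (Pi.single i 1)))
        - (F (x t)).mulVec (θs - θh t) := by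
    simp only [Matrix.mulVec_sub]
    abel
  rw [harg, map_sub, map_sub]
  ring
end

section
/- (Main Theorem: adaptive safety via an adaptive Control Barrier Function, trajectory form.) Let h_a : ℝⁿ × ℝᵖ → ℝ be continuously differentiable, f : ℝⁿ → ℝⁿ, F : ℝⁿ → ℝ^{n×p}, g : ℝⁿ → ℝ^{n×m} be continuous, Γ ∈ ℝ^{p×p} be symmetric positive definite with smallest eigenvalue λ_min(Γ), θ⋆ ∈ ℝᵖ, and c > 0. Suppose x : [0,∞) → ℝⁿ, θ̂ : [0,∞) → ℝᵖ, u : [0,∞) → ℝᵐ are differentiable and satisfy for all t ≥ 0: (i) ẋ(t) = f(x(t)) + F(x(t)) θ⋆ + g(x(t)) u(t); (ii) θ̂̇(t) = Γ τ(t) with τ(t) = −( (∂h_a/∂x)(x(t),θ̂(t)) · F(x(t)) )ᵀ; (iii) the aCBF inequality (∂h_a/∂x)(x(t),θ̂(t)) · ( f(x(t)) + F(x(t)) · ( θ̂(t) − Γ ((∂h_a/∂θ)(x(t),θ̂(t)))ᵀ ) + g(x(t)) u(t) ) ≥ 0. If additionally h_a(x(0), θ̂(0)) > 0, ‖θ⋆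 − θ̂(0)‖ ≤ c, and λ_min(Γ) ≥ c² / (2 h_a(x(0),θ̂(0))), then h_a(x(t), θ̂(t)) ≥ 0 for all t ≥ 0; i.e., the state remains in the family of safe sets S_{θ̂(t)} = {x : h_a(x,θ̂(t)) ≥ 0} for all time. -/
open Matrix

/-- The Euclidean norm of a vector in `ℝ^p`. -/
noncomputable def euclNorm {p : ℕ} (v : Fin p → ℝ) : ℝ :=
  ‖(WithLp.equiv 2 (Fin p → ℝ)).symm v‖

section Aux

lemma aux_rayleigh_dot {p : ℕ} (A : Matrix (Fin p) (Fin p) ℝ) (hA : A.IsHermitian)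
    (w : Fin p → ℝ) :
    (⨅ i, hA.eigenvalues i) * (w ⬝ᵥ w) ≤ w ⬝ᵥ A *ᵥ w := by
  rcases isEmpty_or_nonempty (Fin p) with hp | hp
  · simp [dotProduct, Finset.univ_eq_empty]
  set U : Matrix (Fin p) (Fin p) ℝ := (hA.eigenvectorUnitary : Matrix (Fin p) (Fin p) ℝ) with hU
  set y : Fin p → ℝ := star U *ᵥ w with hy
  have hUU : U * star U = 1 := (Matrix.mem_unitaryGroup_iff).mp hA.eigenvectorUnitary.2
  have key : ∀ (D : Matrix (Fin p) (Fin p) ℝ), w ⬝ᵥ (U * D * star U) *ᵥ w = y ⬝ᵥ D *ᵥ y := by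
    intro D
    rw [← mulVec_mulVec, ← mulVec_mulVec, dotProduct_mulVec w U, hy]
    congr 1
    rw [Matrix.star_eq_conjTranspose, conjTranspose_eq_transpose_of_trivial,
      Matrix.mulVec_transpose]
  have h1 : w ⬝ᵥ A *ᵥ w = y ⬝ᵥ (diagonal (RCLike.ofReal ∘ hA.eigenvalues)) *ᵥ y := by
    conv_lhs => rw [hA.spectral_theorem]
    exact key _
  have h2 : w ⬝ᵥ w = y ⬝ᵥ y := by
    have := key 1
    rwa [mul_one, hUU, one_mulVec, Matrix.one_mulVec] at this
  have hbdd : BddBelow (Set.range fun i => hA.eigenvalues i) :=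
    Set.Finite.bddBelow (Set.finite_range _)
  rw [h1, h2]
  have hdiag : y ⬝ᵥ (diagonal (RCLike.ofReal ∘ hA.eigenvalues)) *ᵥ y
      = ∑ i, hA.eigenvalues i * (y i)^2 := by
    simp [dotProduct, mulVec_diagonal]
    congr 1; funext i; ring
  rw [hdiag, dotProduct, Finset.mul_sum]
  apply Finset.sum_le_sum
  intro i _
  have h3 : (⨅ i, hA.eigenvalues i) ≤ hA.eigenvalues i := ciInf_le hbdd i
  have h4 : y i * y i = (y i)^2 := by ring
  rw [h4]
  exact mul_le_mul_of_nonneg_right h3 (sq_nonneg _)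

lemma aux_quad_bound {p : ℕ} (Γ : Matrix (Fin p) (Fin p) ℝ) (hΓ : Γ.PosDef)
    (v : Fin p → ℝ) (c h0 : ℝ) (h0pos : 0 < h0)
    (hv : v ⬝ᵥ v ≤ c ^ 2)
    (hgain : (⨅ i, hΓ.1.eigenvalues i) ≥ c ^ 2 / (2 * h0)) :
    v ⬝ᵥ Γ⁻¹ *ᵥ v ≤ 2 * h0 := by
  have hinv : (Γ⁻¹).PosDef := hΓ.inv
  set w : Fin p → ℝ := Γ⁻¹ *ᵥ v with hw
  set s : ℝ := v ⬝ᵥ w with hs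
  rcases le_or_gt s 0 with h | hspos
  · nlinarith
  have hne : Nonempty (Fin p) := by
    by_contra h
    have : s = 0 := by
      simp only [hs, dotProduct, Finset.univ_eq_empty_iff.mpr (not_nonempty_iff.mp h)]
      simp
    linarith
  set lam : ℝ := ⨅ i, hΓ.1.eigenvalues i with hlam
  have hlampos : 0 < lam := by
    obtain ⟨i, hi⟩ := exists_eq_ciInf_of_finite (f := fun i => hΓ.1.eigenvalues i)
    rw [hlam, ← hi]
    exact hΓ.eigenvalues_pos i
  have hΓinv : Γ * Γ⁻¹ = 1 := Matrix.mul_nonsing_inv Γ hΓ.det_pos.ne'.isUnit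
  have h1 : lam * (w ⬝ᵥ w) ≤ s := by
    have hr := aux_rayleigh_dot Γ hΓ.1 w
    have h2 : w ⬝ᵥ Γ *ᵥ w = s := by
      rw [hw, mulVec_mulVec, hΓinv, Matrix.one_mulVec, hs, dotProduct_comm]
    linarith
  have hcs : s ^ 2 ≤ (v ⬝ᵥ v) * (w ⬝ᵥ w) := by
    simpa [hs, dotProduct, pow_two] using
      Finset.sum_mul_sq_le_sq_mul_sq Finset.univ v w
  have hW : 0 ≤ w ⬝ᵥ w := Finset.sum_nonneg fun i _ => mul_self_nonneg _
  have hc2 : c ^ 2 ≤ 2 * h0 * lam := by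
    rw [ge_iff_le, div_le_iff₀ (by positivity)] at hgain
    linarith
  nlinarith [mul_le_mul_of_nonneg_right hv hW, mul_le_mul_of_nonneg_left h1 (le_of_lt h0pos)]

lemma aux_clm_mulVec {n p : ℕ} (L : (Fin n → ℝ) →L[ℝ] ℝ) (M : Matrix (Fin n) (Fin p) ℝ)
    (w : Fin p → ℝ) : L (M *ᵥ w) = ∑ i, w i * L (fun j => M j i) := by
  have h : M *ᵥ w = ∑ i, w i • (fun j => M j i) := by
    funext j
    simp [mulVec, dotProduct, Finset.sum_apply, mul_comm]
  rw [h, map_sum]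
  simp

lemma aux_clm_pi_apply {p : ℕ} (G : (Fin p → ℝ) →L[ℝ] ℝ) (v : Fin p → ℝ) :
    G v = ∑ i, v i * G (Pi.single i 1) := by
  have h := G.toLinearMap.pi_apply_eq_sum_univ v
  have hsingle : ∀ i : Fin p, (fun j => if i = j then (1:ℝ) else 0) = Pi.single i 1 := by
    intro i; funext j; simp [Pi.single_apply, eq_comm]
  simp only [smul_eq_mul, hsingle] at h
  exact h

lemma aux_dot_double_sum {p : ℕ} (B : Matrix (Fin p) (Fin p) ℝ) (a b : Fin p → ℝ) :
    ∑ i, ∑ j, B i j * (a i * b j) = a ⬝ᵥ B *ᵥ b := by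
  simp only [dotProduct, mulVec, Finset.mul_sum]
  apply Finset.sum_congr rfl; intro i _
  apply Finset.sum_congr rfl; intro j _
  ring

lemma aux_quad_hasDerivAt {p : ℕ} (B : Matrix (Fin p) (Fin p) ℝ) (hsym : ∀ i j, B i j = B j i)
    (v : ℝ → (Fin p → ℝ)) (d : Fin p → ℝ) (t : ℝ) (hv : HasDerivAt v d t) :
    HasDerivAt (fun s => v s ⬝ᵥ B *ᵥ v s) (2 * (d ⬝ᵥ B *ᵥ v t)) t := by
  have hvi : ∀ i, HasDerivAt (fun s => v s i) (d i) t := fun i =>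
    ((ContinuousLinearMap.proj i : (Fin p → ℝ) →L[ℝ] ℝ).hasFDerivAt).comp_hasDerivAt t hv
  have hsum : HasDerivAt (fun s => ∑ i, ∑ j, B i j * (v s i * v s j))
      (∑ i, ∑ j, B i j * (d i * v t j + v t i * d j)) t := by
    apply HasDerivAt.fun_sum; intro i _
    apply HasDerivAt.fun_sum; intro j _
    exact ((hvi i).mul (hvi j)).const_mul (B i j)
  have hfe : (fun s => v s ⬝ᵥ B *ᵥ v s) = fun s => ∑ i, ∑ j, B i j * (v s i * v s j) := by
    funext s; rw [aux_dot_double_sum]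
  rw [hfe]
  convert hsum using 1
  have expand : ∑ i, ∑ j, B i j * (d i * v t j + v t i * d j)
      = (∑ i, ∑ j, B i j * (d i * v t j)) + ∑ i, ∑ j, B i j * (v t i * d j) := by
    rw [← Finset.sum_add_distrib]
    apply Finset.sum_congr rfl; intro i _
    rw [← Finset.sum_add_distrib]
    apply Finset.sum_congr rfl; intro j _
    ring
  have swap : ∑ i, ∑ j, B i j * (v t i * d j) = ∑ i, ∑ j, B i j * (d i * v t j) := by
    rw [Finset.sum_comm]
    apply Finset.sum_congr rfl; intro i _
    apply Finset.sum_congr rfl; intro j _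
    rw [hsym j i]; ring
  rw [expand, swap, aux_dot_double_sum]
  ring

end Aux

/-- Main theorem (adaptive safety via an aCBF, trajectory form): along the
closed-loop adaptive system with update law `τ = −((∂h_a/∂x) F(x))ᵀ` and
satisfying the aCBF inequality, if `h_a(x(0),θ̂(0)) > 0`, `‖θ⋆ − θ̂(0)‖ ≤ c` and
`λ_min(Γ) ≥ c²/(2 h_a(x(0),θ̂(0)))`, then `h_a(x(t),θ̂(t)) ≥ 0` for all `t ≥ 0`. -/
theorem aCBF_renders_adaptively_safe
    {n p m : ℕ}
    (ha : ((Fin n → ℝ) × (Fin p → ℝ)) → ℝ) (hha : ContDiff ℝ 1 ha)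
    (f : (Fin n → ℝ) → (Fin n → ℝ)) (hf : Continuous f)
    (F : (Fin n → ℝ) → Matrix (Fin n) (Fin p) ℝ) (hF : Continuous F)
    (g : (Fin n → ℝ) → Matrix (Fin n) (Fin m) ℝ) (hg : Continuous g)
    (Γ : Matrix (Fin p) (Fin p) ℝ) (hΓ : Γ.PosDef)
    (θs : Fin p → ℝ) (c : ℝ) (hc : 0 < c)
    (x : ℝ → (Fin n → ℝ)) (θh : ℝ → (Fin p → ℝ)) (u : ℝ → (Fin m → ℝ))
    -- the adaptation law τ(t) = −((∂h_a/∂x)(x(t),θ̂(t)) · F(x(t)))ᵀ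
    (τ : ℝ → (Fin p → ℝ))
    (hτ : ∀ t, 0 ≤ t → τ t = fun i =>
      -(fderiv ℝ (fun y => ha (y, θh t)) (x t)) (fun j => F (x t) j i))
    -- (i) closed-loop dynamics ẋ = f(x) + F(x) θ⋆ + g(x) u
    (hx : ∀ t, 0 ≤ t → HasDerivAt x
      (f (x t) + (F (x t)).mulVec θs + (g (x t)).mulVec (u t)) t)
    -- (ii) parameter update θ̂̇ = Γ τ
    (hθh : ∀ t, 0 ≤ t → HasDerivAt θh (Γ.mulVec (τ t)) t)
    -- (iii) the aCBF inequality
    (hcbf : ∀ t, 0 ≤ t →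
      0 ≤ (fderiv ℝ (fun y => ha (y, θh t)) (x t))
        (f (x t)
          + (F (x t)).mulVec
              (θh t - Γ.mulVec (fun i =>
                (fderiv ℝ (fun θ => ha (x t, θ)) (θh t)) (Pi.single i 1)))
          + (g (x t)).mulVec (u t)))
    -- initial conditions
    (hinit : 0 < ha (x 0, θh 0))
    (hθ0 : euclNorm (θs - θh 0) ≤ c)
    -- adaptive gain lower bound λ_min(Γ) ≥ c²/(2 h_a(x₀,θ̂₀))
    (hgain : (⨅ i, hΓ.1.eigenvalues i) ≥ c ^ 2 / (2 * ha (x 0, θh 0))) :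
    ∀ t, 0 ≤ t → 0 ≤ ha (x t, θh t) := by
  have hinv : (Γ⁻¹).PosDef := hΓ.inv
  have hΓinv : Γ * Γ⁻¹ = 1 := Matrix.mul_nonsing_inv Γ hΓ.det_pos.ne'.isUnit
  have hΓsymT : Γᵀ = Γ := by
    rw [← conjTranspose_eq_transpose_of_trivial]; exact hΓ.1
  have hBsym : ∀ i j, Γ⁻¹ i j = Γ⁻¹ j i := by
    intro i j
    have h := hinv.1
    have := congrFun (congrFun h i) j
    simpa [conjTranspose_apply] using this.symm
  set θt : ℝ → (Fin p → ℝ) := fun s => θs - θh s with hθt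
  set q : ℝ → ℝ := fun s => θt s ⬝ᵥ Γ⁻¹ *ᵥ θt s with hq
  set V : ℝ → ℝ := fun s => 2 * ha (x s, θh s) - q s with hV
  -- derivative of V at every t ≥ 0
  have hVder : ∀ t, 0 ≤ t → HasDerivAt V
      (2 * (fderiv ℝ (fun y => ha (y, θh t)) (x t))
        (f (x t)
          + (F (x t)).mulVec
              (θh t - Γ.mulVec (fun i =>
                (fderiv ℝ (fun θ => ha (x t, θ)) (θh t)) (Pi.single i 1)))
          + (g (x t)).mulVec (u t))) t := by
    intro t ht
    set L := fderiv ℝ (fun y => ha (y, θh t)) (x t) with hL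
    set G := fderiv ℝ (fun θ => ha (x t, θ)) (θh t) with hG
    set grad : Fin p → ℝ := fun i => G (Pi.single i 1) with hgrad
    set xdot : Fin n → ℝ := f (x t) + F (x t) *ᵥ θs + g (x t) *ᵥ u t with hxdot
    -- chain rule for ha-part
    have hd : Differentiable ℝ ha := hha.differentiable one_ne_zero
    have hfd : HasFDerivAt ha (fderiv ℝ ha (x t, θh t)) (x t, θh t) := (hd _).hasFDerivAt
    set D := fderiv ℝ ha (x t, θh t) with hD
    have h1 : HasFDerivAt (fun y => ha (y, θh t))
        (D.comp (ContinuousLinearMap.inl ℝ (Fin n → ℝ) (Fin p → ℝ))) (x t) :=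
      hfd.comp (x t) (hasFDerivAt_prodMk_left (x t) (θh t))
    have h2 : HasFDerivAt (fun θ => ha (x t, θ))
        (D.comp (ContinuousLinearMap.inr ℝ (Fin n → ℝ) (Fin p → ℝ))) (θh t) :=
      hfd.comp (θh t) (hasFDerivAt_prodMk_right (x t) (θh t))
    have e1 : L = D.comp (ContinuousLinearMap.inl ℝ (Fin n → ℝ) (Fin p → ℝ)) := h1.fderiv
    have e2 : G = D.comp (ContinuousLinearMap.inr ℝ (Fin n → ℝ) (Fin p → ℝ)) := h2.fderiv
    have hcomp : HasDerivAt (fun s => ha (x s, θh s)) (D (xdot, Γ *ᵥ τ t)) t :=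
      hfd.comp_hasDerivAt t ((hx t ht).prodMk (hθh t ht))
    have hsplit : D (xdot, Γ *ᵥ τ t) = L xdot + G (Γ *ᵥ τ t) := by
      rw [e1, e2]
      simp only [ContinuousLinearMap.comp_apply, ContinuousLinearMap.inl_apply,
        ContinuousLinearMap.inr_apply]
      rw [← map_add]
      congr 1
      simp
    have hha_deriv : HasDerivAt (fun s => ha (x s, θh s)) (L xdot + G (Γ *ᵥ τ t)) t := by
      rw [← hsplit]; exact hcomp
    -- derivative of q
    have hθtder : HasDerivAt θt (-(Γ *ᵥ τ t)) t := (hθh t ht).const_sub θs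
    have hqder : HasDerivAt q (2 * ((-(Γ *ᵥ τ t)) ⬝ᵥ Γ⁻¹ *ᵥ θt t)) t :=
      aux_quad_hasDerivAt Γ⁻¹ hBsym θt _ t hθtder
    have hVd : HasDerivAt V
        (2 * (L xdot + G (Γ *ᵥ τ t)) - 2 * ((-(Γ *ᵥ τ t)) ⬝ᵥ Γ⁻¹ *ᵥ θt t)) t :=
      (hha_deriv.const_mul 2).sub hqder
    -- algebraic identification of the derivative
    have hτt : τ t = fun i => -(L (fun j => F (x t) j i)) := hτ t ht
    have hGpart : G (Γ *ᵥ τ t) = -(L (F (x t) *ᵥ (Γ *ᵥ grad))) := by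
      have ha1 : G (Γ *ᵥ τ t) = (Γ *ᵥ τ t) ⬝ᵥ grad := by
        rw [aux_clm_pi_apply]; rfl
      have ha2 : (Γ *ᵥ τ t) ⬝ᵥ grad = τ t ⬝ᵥ (Γ *ᵥ grad) := by
        rw [dotProduct_comm, dotProduct_mulVec, ← Matrix.mulVec_transpose, hΓsymT,
          dotProduct_comm]
      rw [ha1, ha2, dotProduct, aux_clm_mulVec, ← Finset.sum_neg_distrib]
      apply Finset.sum_congr rfl
      intro i _
      rw [hτt]
      ring
    have hQpart : (-(Γ *ᵥ τ t)) ⬝ᵥ Γ⁻¹ *ᵥ θt t = L (F (x t) *ᵥ θt t) := by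
      have hBsymT : Γ⁻¹ᵀ = Γ⁻¹ := by
        rw [← conjTranspose_eq_transpose_of_trivial]; exact hinv.1
      have hb1 : (Γ *ᵥ τ t) ⬝ᵥ Γ⁻¹ *ᵥ θt t = τ t ⬝ᵥ θt t := by
        rw [dotProduct_mulVec, ← Matrix.mulVec_transpose, hBsymT, mulVec_mulVec,
          Matrix.nonsing_inv_mul Γ hΓ.det_pos.ne'.isUnit, Matrix.one_mulVec]
      have hb2 : τ t ⬝ᵥ θt t = -(L (F (x t) *ᵥ θt t)) := by
        rw [dotProduct, aux_clm_mulVec, ← Finset.sum_neg_distrib]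
        apply Finset.sum_congr rfl
        intro i _
        rw [hτt]
        ring
      rw [neg_dotProduct, hb1, hb2, neg_neg]
    have hvec : xdot - F (x t) *ᵥ (Γ *ᵥ grad) - F (x t) *ᵥ θt t
        = f (x t) + F (x t) *ᵥ (θh t - Γ *ᵥ grad) + g (x t) *ᵥ u t := by
      rw [hxdot, hθt, Matrix.mulVec_sub, Matrix.mulVec_sub]
      abel
    have hfinal : 2 * (L xdot + G (Γ *ᵥ τ t)) - 2 * ((-(Γ *ᵥ τ t)) ⬝ᵥ Γ⁻¹ *ᵥ θt t)
        = 2 * L (f (x t) + F (x t) *ᵥ (θh t - Γ *ᵥ grad) + g (x t) *ᵥ u t) := by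
      rw [hGpart, hQpart, ← hvec, map_sub, map_sub]
      ring
    rw [hfinal] at hVd
    exact hVd
  -- monotonicity of V on [0, ∞)
  have hmono : MonotoneOn V (Set.Ici (0:ℝ)) := by
    apply monotoneOn_of_deriv_nonneg (convex_Ici 0)
    · intro t ht
      exact ((hVder t ht).continuousAt).continuousWithinAt
    · intro t ht
      rw [interior_Ici] at ht
      exact ((hVder t (le_of_lt ht)).differentiableAt).differentiableWithinAt
    · intro t ht
      rw [interior_Ici] at ht
      rw [(hVder t (le_of_lt ht)).deriv]
      have := hcbf t (le_of_lt ht)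
      linarith
  -- initial bound
  have hv0 : θt 0 ⬝ᵥ θt 0 ≤ c ^ 2 := by
    have hne : euclNorm (θt 0) = Real.sqrt (∑ i, (θt 0 i) ^ 2) := by
      rw [euclNorm, EuclideanSpace.norm_eq]
      congr 1
      apply Finset.sum_congr rfl
      intro i _
      simp [WithLp.equiv_symm_apply, PiLp.toLp_apply, Real.norm_eq_abs, sq_abs]
    have h1 : θt 0 ⬝ᵥ θt 0 = (euclNorm (θt 0)) ^ 2 := by
      rw [hne, Real.sq_sqrt (Finset.sum_nonneg fun i _ => sq_nonneg _)]
      apply Finset.sum_congr rfl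
      intro i _
      ring
    rw [h1]
    have h2 : 0 ≤ euclNorm (θt 0) := norm_nonneg _
    nlinarith [hθ0]
  have hq0 : q 0 ≤ 2 * ha (x 0, θh 0) :=
    aux_quad_bound Γ hΓ (θt 0) c _ hinit hv0 hgain
  -- conclusion
  intro t ht
  have hVle : V 0 ≤ V t := hmono (Set.self_mem_Ici) ht ht
  have hqt : 0 ≤ q t := by
    have := hinv.posSemidef.dotProduct_mulVec_nonneg (θt t)
    simpa using this
  have hV0 : 0 ≤ V 0 := by
    simp only [hV]
    linarith
  have : 0 ≤ 2 * ha (x t, θh t) - q t := le_trans hV0 hVle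
  linarith
end

section
/- (Control Barrier Function safety, trajectory/comparison form.) Let h : ℝⁿ → ℝ be continuously differentiable and let α : ℝ → ℝ be locally Lipschitz, strictly monotonically increasing, with α(0) = 0. Let x : [0,T) → ℝⁿ be differentiable and suppose that for all t ∈ [0,T), the derivative of t ↦ h(x(t)) satisfies (d/dt) h(x(t)) ≥ −α(h(x(t))). If h(x(0)) ≥ 0, then h(x(t)) ≥ 0 for all t ∈ [0,T); i.e., the 0-superlevel set S = {x ∈ ℝⁿ : h(x) ≥ 0} is forward invariant along the trajectory. -/
/-- CBF safety in trajectory/comparison form: if `h` is `C¹`, `α` is locally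
Lipschitz, strictly increasing with `α 0 = 0`, the trajectory `x` is
differentiable on `[0,T)` with derivative `x'`, the derivative of `t ↦ h(x(t))`
satisfies `(d/dt) h(x(t)) ≥ −α(h(x(t)))` there, and `h(x(0)) ≥ 0`, then
`h(x(t)) ≥ 0` for all `t ∈ [0,T)`: the 0-superlevel set of `h` is forward
invariant along the trajectory. -/
theorem cbf_forward_invariance
    {n : ℕ} (T : ℝ) (hT : 0 < T)
    (h : (Fin n → ℝ) → ℝ) (hh : ContDiff ℝ 1 h)
    (α : ℝ → ℝ) (hαlip : LocallyLipschitz α) (hαmono : StrictMono α)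
    (hα0 : α 0 = 0)
    (x : ℝ → (Fin n → ℝ)) (x' : ℝ → (Fin n → ℝ))
    (hx : ∀ t ∈ Set.Ico (0 : ℝ) T, HasDerivAt x (x' t) t)
    (hineq : ∀ t ∈ Set.Ico (0 : ℝ) T,
      (fderiv ℝ h (x t)) (x' t) ≥ -α (h (x t)))
    (hinit : 0 ≤ h (x 0)) :
    ∀ t ∈ Set.Ico (0 : ℝ) T, 0 ≤ h (x t) := by
  intro t ht
  -- the composite function φ = h ∘ x and its derivative
  set φ : ℝ → ℝ := fun s => h (x s) with hφ
  have hφderiv : ∀ s ∈ Set.Ico (0 : ℝ) T,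
      HasDerivAt φ ((fderiv ℝ h (x s)) (x' s)) s := by
    intro s hs
    have hdh : HasFDerivAt h (fderiv ℝ h (x s)) (x s) :=
      (hh.differentiable one_ne_zero (x s)).hasFDerivAt
    exact hdh.comp_hasDerivAt s (hx s hs)
  -- work with g = -φ, show g t ≤ ε for all ε > 0
  have key : ∀ ε > (0:ℝ), -φ t ≤ ε := by
    intro ε hε
    have hsub : Set.Icc (0:ℝ) t ⊆ Set.Ico (0:ℝ) T := by
      intro s hs; exact ⟨hs.1, lt_of_le_of_lt hs.2 ht.2⟩
    have hg' : ∀ s ∈ Set.Ico (0:ℝ) t,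
        HasDerivWithinAt (fun s => -φ s) (-((fderiv ℝ h (x s)) (x' s))) (Set.Ici s) s := by
      intro s hs
      exact ((hφderiv s (hsub ⟨hs.1, hs.2.le⟩)).neg).hasDerivWithinAt
    have hgc : ContinuousOn (fun s => -φ s) (Set.Icc (0:ℝ) t) := by
      intro s hs
      exact ((hφderiv s (hsub hs)).neg).continuousAt.continuousWithinAt
    have := image_le_of_deriv_right_lt_deriv_boundary (B := fun _ => ε) (B' := fun _ => 0)
      hgc hg' (by simpa using le_trans (neg_nonpos_of_nonneg hinit) hε.le)
      (fun s => hasDerivAt_const s ε)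
      (fun s hs heq => by
        have h1 : -((fderiv ℝ h (x s)) (x' s)) ≤ α (φ s) := by
          have := hineq s (hsub ⟨hs.1, hs.2.le⟩)
          linarith
        have hφs : φ s = -ε := by
          have : -φ s = ε := heq
          linarith
        have h2 : α (φ s) < 0 := by
          rw [hφs, ← hα0]; exact hαmono (by linarith)
        exact lt_of_le_of_lt h1 h2)
      (Set.right_mem_Icc.2 ht.1)
    exact this
  have : -φ t ≤ 0 := le_of_forall_pos_le_add (by simpa using key)
  linarith
end

section
/- (Corollary to Liénard's Theorem.) Under the hypotheses of Liénard's Theorem (F, g : ℝ → ℝ continuously differentiable and odd, x·g(x) > 0 for x ≠ 0, F(0) = 0, F′(0) < 0, F having its single positive zero at x = a, F strictly increasing to ∞ on [a,∞)), the orbit Φ of any nonconstant periodic solution of ẋ = y − F(x), ẏ = −g(x) is symmetric about the origin — i.e., (x, y) ∈ Φ implies (−x, −y) ∈ Φ — and Φ contains a point (x₂, y₂) with x₂ > a. -/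
open Filter Set Topology

/-- periodic shift by integer multiples. -/
lemma lienard_periodZ {h : ℝ → ℝ} {T : ℝ} (hp : ∀ t, h (t + T) = h t) :
    ∀ (n : ℤ) (t : ℝ), h (t + n * T) = h t := by
  intro n
  induction n using Int.induction_on with
  | zero => simp
  | succ k ih =>
      intro t
      have ih' := ih t
      push_cast at ih' ⊢
      have h1 : t + ((k : ℝ) + 1) * T = (t + (k : ℝ) * T) + T := by ring
      rw [h1, hp]; exact ih'
  | pred k ih =>
      intro t
      have ih' := ih t
      push_cast at ih' ⊢
      have h2 := hp (t + (-(k : ℝ) - 1) * T)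
      have h1 : t + (-(k : ℝ) - 1) * T + T = t + -(k : ℝ) * T := by ring
      rw [h1] at h2
      rw [← h2]; exact ih'

/-- A monotone periodic function is constant. -/
lemma lienard_mono_const {h : ℝ → ℝ} {T : ℝ} (hT : 0 < T) (hm : Monotone h)
    (hp : ∀ t, h (t + T) = h t) : ∀ s t, h s = h t := by
  have key : ∀ s t : ℝ, s ≤ t → h s = h t := by
    intro s t hst
    obtain ⟨n, hn⟩ := exists_nat_ge ((t - s) / T)
    have hTn : t - s ≤ n * T := by
      rw [div_le_iff₀ hT] at hn; linarith
    have h1 : h (s + (n : ℤ) * T) = h s := lienard_periodZ hp n s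
    have h2 : h t ≤ h (s + (n : ℤ) * T) := hm (by push_cast; linarith)
    exact le_antisymm (hm hst) (by rw [h1] at h2; exact h2)
  intro s t
  rcases le_total s t with hst | hts
  · exact key s t hst
  · exact (key t s hts).symm

/-- continuous inverse of an injective continuous function on a compact interval. -/
lemma lienard_inverse {f : ℝ → ℝ} {p q : ℝ} (hpq : p ≤ q)
    (hc : ContinuousOn f (Set.Icc p q)) (hinj : Set.InjOn f (Set.Icc p q)) :
    ∃ τ : ℝ → ℝ, ContinuousOn τ (f '' Set.Icc p q) ∧
      (∀ c ∈ f '' Set.Icc p q, τ c ∈ Set.Icc p q ∧ f (τ c) = c) ∧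
      (∀ t ∈ Set.Icc p q, τ (f t) = t) := by
  haveI : CompactSpace (Set.Icc p q) := isCompact_iff_compactSpace.mp isCompact_Icc
  set Fr : Set.Icc p q → ℝ := (Set.Icc p q).restrict f with hFr
  have hFc : Continuous Fr := hc.restrict
  have hFinj : Function.Injective Fr := fun s t h => Subtype.ext (hinj s.2 t.2 h)
  have emb := hFc.isClosedEmbedding hFinj
  let e := emb.toIsEmbedding.toHomeomorph
  have hrange : Set.range Fr = f '' Set.Icc p q := Set.range_restrict f _
  classical
  refine ⟨fun c => if h : c ∈ Set.range Fr then ((e.symm ⟨c, h⟩ : Set.Icc p q) : ℝ) else p,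
    ?_, ?_, ?_⟩
  · rw [← hrange, continuousOn_iff_continuous_restrict]
    have : (Set.range Fr).domRestrict (fun c =>
        if h : c ∈ Set.range Fr then ((e.symm ⟨c, h⟩ : Set.Icc p q) : ℝ) else p)
        = fun c => ((e.symm c : Set.Icc p q) : ℝ) := by
      funext c
      simp only [Set.domRestrict_apply, dif_pos c.2]
    rw [this]
    exact continuous_subtype_val.comp e.symm.continuous
  · intro c hc'
    rw [← hrange] at hc'
    simp only [dif_pos hc']
    refine ⟨(e.symm ⟨c, hc'⟩).2, ?_⟩
    have : Fr (e.symm ⟨c, hc'⟩) = c := by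
      have := e.apply_symm_apply ⟨c, hc'⟩
      exact congrArg Subtype.val this
    exact this
  · intro t ht
    have hmem : f t ∈ Set.range Fr := ⟨⟨t, ht⟩, rfl⟩
    simp only [dif_pos hmem]
    have : e.symm ⟨f t, hmem⟩ = ⟨t, ht⟩ := by
      apply e.injective
      rw [e.apply_symm_apply]
      exact Subtype.ext rfl
    rw [this]

/-- Key crossing lemma: a periodic orbit crossing the `y`-axis at its maximal
crossing intersects its own reflection. -/
lemma lienard_key {F g x y : ℝ → ℝ} {T : ℝ}
    (hFc : Continuous F) (hF0 : F 0 = 0)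
    (gpos : ∀ w : ℝ, 0 < w → 0 < g w) (gneg : ∀ w : ℝ, w < 0 → g w < 0)
    (hx' : ∀ t, HasDerivAt x (y t - F (x t)) t)
    (hy' : ∀ t, HasDerivAt y (-(g (x t))) t)
    (hT : 0 < T) (hperx : ∀ t, x (t + T) = x t)
    (noeq : ∀ t, ¬(x t = 0 ∧ y t = 0))
    (t₀ : ℝ) (hx₀ : x t₀ = 0) (hy₀ : 0 < y t₀)
    (hmax : ∀ t, x t = 0 → |y t| ≤ y t₀) :
    ∃ s σ, x s = -x σ ∧ y s = -y σ := by
  have hxc : Continuous x := by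
    rw [continuous_iff_continuousAt]; exact fun t => (hx' t).continuousAt
  have hyc : Continuous y := by
    rw [continuous_iff_continuousAt]; exact fun t => (hy' t).continuousAt
  have hxdc : Continuous fun t => y t - F (x t) := hyc.sub (hFc.comp hxc)
  -- local monotonicity near points where x' > 0
  have loc : ∀ c : ℝ, 0 < y c - F (x c) → ∀ δ₀ : ℝ, 0 < δ₀ →
      ∃ δ : ℝ, 0 < δ ∧ δ ≤ δ₀ ∧ StrictMonoOn x (Set.Icc (c - δ) (c + δ)) := by
    intro c hc' δ₀ hδ₀
    have hU : (fun t => y t - F (x t)) ⁻¹' Set.Ioi 0 ∈ 𝓝 c :=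
      hxdc.continuousAt.preimage_mem_nhds (Ioi_mem_nhds hc')
    obtain ⟨ε, hε0, hεsub⟩ := Metric.mem_nhds_iff.mp hU
    refine ⟨min (ε/2) δ₀, by positivity, min_le_right _ _, ?_⟩
    apply strictMonoOn_of_deriv_pos (convex_Icc _ _) hxc.continuousOn
    intro t ht
    rw [interior_Icc] at ht
    rw [(hx' t).deriv]
    have hmle : min (ε/2) δ₀ ≤ ε/2 := min_le_left _ _
    have habs : |t - c| < ε := by
      rw [abs_lt]; constructor <;> [linarith [ht.1]; linarith [ht.2]]
    have : t ∈ Metric.ball c ε := by rw [Metric.mem_ball, Real.dist_eq]; exact habs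
    exact hεsub this
  have hxd₀ : 0 < y t₀ - F (x t₀) := by rw [hx₀, hF0]; simpa using hy₀
  obtain ⟨δ, hδ0, hδT, hmono₀⟩ := loc t₀ hxd₀ (T/2) (by positivity)
  have hmem₀ : t₀ ∈ Set.Icc (t₀ - δ) (t₀ + δ) := by constructor <;> linarith
  have hposδ : ∀ t, t₀ < t → t ≤ t₀ + δ → 0 < x t := by
    intro t h1 h2
    have := hmono₀ hmem₀ ⟨by linarith, h2⟩ h1
    rwa [hx₀] at this
  have hnegδ : ∀ t, t₀ - δ ≤ t → t < t₀ → x t < 0 := by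
    intro t h1 h2
    have := hmono₀ ⟨h1, by linarith⟩ hmem₀ h2
    rwa [hx₀] at this
  -- first return to the axis on the right
  have hScpt : IsCompact (Set.Icc (t₀ + δ) (t₀ + T) ∩ x ⁻¹' Set.Iic 0) :=
    isCompact_Icc.inter_right (isClosed_Iic.preimage hxc)
  have hSne : (Set.Icc (t₀ + δ) (t₀ + T) ∩ x ⁻¹' Set.Iic 0).Nonempty := by
    refine ⟨t₀ + T, ⟨by constructor <;> linarith, ?_⟩⟩
    simp only [Set.mem_preimage, Set.mem_Iic, hperx t₀, hx₀, le_refl]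
  set t₁ := sInf (Set.Icc (t₀ + δ) (t₀ + T) ∩ x ⁻¹' Set.Iic 0) with ht₁def
  have ht₁ : t₁ ∈ Set.Icc (t₀ + δ) (t₀ + T) ∩ x ⁻¹' Set.Iic 0 := hScpt.sInf_mem hSne
  have ht₁lb : t₀ + δ ≤ t₁ := ht₁.1.1
  have ht₁ub : t₁ ≤ t₀ + T := ht₁.1.2
  have hxt₁le : x t₁ ≤ 0 := ht₁.2
  have hpos : ∀ t, t₀ < t → t < t₁ → 0 < x t := by
    intro t h1 h2
    rcases le_or_gt t (t₀ + δ) with h3 | h3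
    · exact hposδ t h1 h3
    · by_contra hle
      push_neg at hle
      have htS : t ∈ Set.Icc (t₀ + δ) (t₀ + T) ∩ x ⁻¹' Set.Iic 0 :=
        ⟨⟨h3.le, by linarith⟩, hle⟩
      have := csInf_le hScpt.bddBelow htS
      rw [← ht₁def] at this
      linarith
  have hxt₁ : x t₁ = 0 := by
    refine le_antisymm hxt₁le (le_of_not_gt fun hlt => ?_)
    have hx1 : 0 < x (t₀ + δ) := hposδ _ (by linarith) le_rfl
    obtain ⟨z, hzmem, hz0⟩ := intermediate_value_Icc' ht₁lb hxc.continuousOn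
      (Set.mem_Icc.mpr ⟨hlt.le, hx1.le⟩)
    have hzne : z ≠ t₁ := fun h => by rw [← h, hz0] at hlt; exact lt_irrefl 0 hlt
    have := hpos z (by linarith [hzmem.1]) (lt_of_le_of_ne hzmem.2 hzne)
    rw [hz0] at this; exact lt_irrefl 0 this
  have ht₀t₁ : t₀ < t₁ := by linarith
  have hyanti : StrictAntiOn y (Set.Icc t₀ t₁) := by
    apply strictAntiOn_of_deriv_neg (convex_Icc _ _) hyc.continuousOn
    intro t ht
    rw [interior_Icc] at ht
    rw [(hy' t).deriv]
    have := gpos _ (hpos t ht.1 ht.2)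
    linarith
  have hβM : y t₁ < y t₀ := hyanti ⟨le_rfl, ht₀t₁.le⟩ ⟨ht₀t₁.le, le_rfl⟩ ht₀t₁
  have hβ0 : y t₁ < 0 := by
    have hβle : y t₁ ≤ 0 := by
      by_contra h
      push_neg at h
      have hxd₁ : 0 < y t₁ - F (x t₁) := by rw [hxt₁, hF0]; simpa using h
      obtain ⟨δ₁, hδ₁0, hδ₁le, hmono₁⟩ := loc t₁ hxd₁ ((t₁ - t₀)/2) (by linarith)
      have h1 : x (t₁ - δ₁) < x t₁ :=
        hmono₁ ⟨le_rfl, by linarith⟩ ⟨by linarith, by linarith⟩ (by linarith)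
      rw [hxt₁] at h1
      have := hpos (t₁ - δ₁) (by linarith) (by linarith)
      linarith
    exact lt_of_le_of_ne hβle fun h => noeq t₁ ⟨hxt₁, h⟩
  -- last departure from the axis on the left
  have hS'cpt : IsCompact (Set.Icc (t₀ - T) (t₀ - δ) ∩ x ⁻¹' Set.Ici 0) :=
    isCompact_Icc.inter_right (isClosed_Ici.preimage hxc)
  have hxt₀T : x (t₀ - T) = 0 := by
    have := hperx (t₀ - T)
    simp only [sub_add_cancel] at this
    rw [← this, hx₀]
  have hS'ne : (Set.Icc (t₀ - T) (t₀ - δ) ∩ x ⁻¹' Set.Ici 0).Nonempty := by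
    refine ⟨t₀ - T, ⟨by constructor <;> linarith, ?_⟩⟩
    simp [Set.mem_preimage, Set.mem_Ici, hxt₀T]
  set r := sSup (Set.Icc (t₀ - T) (t₀ - δ) ∩ x ⁻¹' Set.Ici 0) with hrdef
  have hr : r ∈ Set.Icc (t₀ - T) (t₀ - δ) ∩ x ⁻¹' Set.Ici 0 := hS'cpt.sSup_mem hS'ne
  have hrub : r ≤ t₀ - δ := hr.1.2
  have hxrge : 0 ≤ x r := hr.2
  have hneg : ∀ t, r < t → t < t₀ → x t < 0 := by
    intro t h1 h2
    rcases le_or_gt (t₀ - δ) t with h3 | h3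
    · exact hnegδ t h3 h2
    · by_contra hge
      push_neg at hge
      have htS : t ∈ Set.Icc (t₀ - T) (t₀ - δ) ∩ x ⁻¹' Set.Ici 0 :=
        ⟨⟨by linarith [hr.1.1], h3.le⟩, hge⟩
      have := le_csSup hS'cpt.bddAbove htS
      rw [← hrdef] at this
      linarith
  have hxr : x r = 0 := by
    refine le_antisymm (le_of_not_gt fun hlt => ?_) hxrge
    have hx1 : x (t₀ - δ) < 0 := hnegδ _ le_rfl (by linarith)
    obtain ⟨z, hzmem, hz0⟩ := intermediate_value_Icc' hrub hxc.continuousOn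
      (Set.mem_Icc.mpr ⟨hx1.le, hlt.le⟩)
    have hzne : z ≠ r := fun h => by rw [← h, hz0] at hlt; exact lt_irrefl 0 hlt
    have := hneg z (lt_of_le_of_ne hzmem.1 (Ne.symm hzne)) (by linarith [hzmem.2])
    rw [hz0] at this; exact lt_irrefl 0 this
  have hrt₀ : r < t₀ := by linarith
  have hymono : StrictMonoOn y (Set.Icc r t₀) := by
    apply strictMonoOn_of_deriv_pos (convex_Icc _ _) hyc.continuousOn
    intro t ht
    rw [interior_Icc] at ht
    rw [(hy' t).deriv]
    have := gneg _ (hneg t ht.1 ht.2)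
    linarith
  have hyr0 : y r < 0 := by
    have hyrle : y r ≤ 0 := by
      by_contra h
      push_neg at h
      have hxdr : 0 < y r - F (x r) := by rw [hxr, hF0]; simpa using h
      obtain ⟨δ₂, hδ₂0, hδ₂le, hmono₂⟩ := loc r hxdr ((t₀ - r)/2) (by linarith)
      have h1 : x r < x (r + δ₂) :=
        hmono₂ ⟨by linarith, by linarith⟩ ⟨by linarith, le_rfl⟩ (by linarith)
      rw [hxr] at h1
      have := hneg (r + δ₂) (by linarith) (by linarith)
      linarith
    exact lt_of_le_of_ne hyrle fun h => noeq r ⟨hxr, h⟩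
  have hβgeM : -(y t₀) ≤ y t₁ := by
    have := hmax t₁ hxt₁
    rw [abs_le] at this
    exact this.1
  have hα'leM : -(y r) ≤ y t₀ := by
    have := hmax r hxr
    rwa [abs_of_neg hyr0] at this
  rcases eq_or_lt_of_le hα'leM with heq | hα'M
  · exact ⟨t₀, r, by rw [hx₀, hxr]; ring, by linarith⟩
  rcases eq_or_lt_of_le hβgeM with heq | hβM'
  · exact ⟨t₁, t₀, by rw [hxt₁, hx₀]; ring, by linarith⟩
  -- continuous inverses of y along the two arcs
  obtain ⟨τ, hτc, hτmem, hτleft⟩ := lienard_inverse ht₀t₁.le hyc.continuousOn hyanti.injOn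
  obtain ⟨τ', hτ'c, hτ'mem, hτ'left⟩ := lienard_inverse hrt₀.le hyc.continuousOn hymono.injOn
  have him₁ : Set.Icc (y t₁) (y t₀) ⊆ y '' Set.Icc t₀ t₁ :=
    intermediate_value_Icc' ht₀t₁.le hyc.continuousOn
  have him₂ : Set.Icc (y r) (y t₀) ⊆ y '' Set.Icc r t₀ :=
    intermediate_value_Icc hrt₀.le hyc.continuousOn
  have hsub1 : ∀ c ∈ Set.Icc (y t₁) (-(y r)), c ∈ y '' Set.Icc t₀ t₁ := by
    intro c hc
    exact him₁ ⟨hc.1, by linarith [hc.2]⟩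
  have hsubneg : ∀ c ∈ Set.Icc (y t₁) (-(y r)), -c ∈ y '' Set.Icc r t₀ := by
    intro c hc
    exact him₂ ⟨by linarith [hc.2], by linarith [hc.1]⟩
  have hΔc : ContinuousOn (fun c => x (τ c) + x (τ' (-c))) (Set.Icc (y t₁) (-(y r))) := by
    apply ContinuousOn.add
    · exact hxc.comp_continuousOn ((hτc.mono (fun c hc => hsub1 c hc)).congr (fun c hc => rfl))
    · apply hxc.comp_continuousOn
      apply ContinuousOn.comp hτ'c continuous_neg.continuousOn
      intro c hc
      exact hsubneg c hc
  have hβα' : y t₁ ≤ -(y r) := by linarith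
  have hΔβ : x (τ (y t₁)) + x (τ' (-(y t₁))) < 0 := by
    have h1 : τ (y t₁) = t₁ := hτleft t₁ ⟨ht₀t₁.le, le_rfl⟩
    have h2 := hτ'mem (-(y t₁)) (hsubneg (y t₁) ⟨le_rfl, hβα'⟩)
    have h3 : x (τ' (-(y t₁))) < 0 := by
      apply hneg
      · rcases eq_or_lt_of_le h2.1.1 with h | h
        · exfalso
          have : y (τ' (-(y t₁))) = y r := by rw [← h]
          rw [h2.2] at this
          linarith
        · exact h
      · rcases eq_or_lt_of_le h2.1.2 with h | h
        · exfalso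
          have : y (τ' (-(y t₁))) = y t₀ := by rw [h]
          rw [h2.2] at this
          linarith
        · exact h
    rw [h1, hxt₁]
    linarith
  have hΔα' : 0 < x (τ (-(y r))) + x (τ' (-(-(y r)))) := by
    have h1 : τ' (-(-(y r))) = r := by
      rw [neg_neg]
      exact hτ'left r ⟨le_rfl, hrt₀.le⟩
    have h2 := hτmem (-(y r)) (hsub1 (-(y r)) ⟨hβα', le_rfl⟩)
    have h3 : 0 < x (τ (-(y r))) := by
      apply hpos
      · rcases eq_or_lt_of_le h2.1.1 with h | h
        · exfalso
          have : y (τ (-(y r))) = y t₀ := by rw [← h]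
          rw [h2.2] at this
          linarith
        · exact h
      · rcases eq_or_lt_of_le h2.1.2 with h | h
        · exfalso
          have : y (τ (-(y r))) = y t₁ := by rw [h]
          rw [h2.2] at this
          linarith
        · exact h
    rw [h1, hxr]
    linarith
  obtain ⟨c, hcmem, hc0⟩ := intermediate_value_Icc hβα' hΔc
    (Set.mem_Icc.mpr ⟨hΔβ.le, hΔα'.le⟩)
  have hc0' : x (τ c) + x (τ' (-c)) = 0 := hc0
  refine ⟨τ c, τ' (-c), by linarith, ?_⟩
  have h1 := (hτmem c (hsub1 c hcmem)).2
  have h2 := (hτ'mem (-c) (hsubneg c hcmem)).2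
  rw [h1, h2]
  ring

lemma lienard_half {F g x y : ℝ → ℝ} {T : ℝ}
    (hF0 : F 0 = 0) (g0 : g 0 = 0)
    (gpos : ∀ w : ℝ, 0 < w → 0 < g w)
    (hx' : ∀ t, HasDerivAt x (y t - F (x t)) t)
    (hy' : ∀ t, HasDerivAt y (-(g (x t))) t)
    (hT : 0 < T) (hper : ∀ t, x (t + T) = x t ∧ y (t + T) = y t)
    (hnc : ∃ t s, (x t, y t) ≠ (x s, y s)) :
    ∃ t, x t < 0 := by
  by_contra h
  push_neg at h
  have hgge : ∀ t, 0 ≤ g (x t) := fun t => by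
    rcases eq_or_lt_of_le (h t) with he | hl
    · rw [← he, g0]
    · exact (gpos _ hl).le
  have hydiff : Differentiable ℝ y := fun t => (hy' t).differentiableAt
  have hmono : Monotone fun t => -y t := by
    apply monotone_of_deriv_nonneg hydiff.neg
    intro t
    rw [((hy' t).neg).deriv]
    simpa using hgge t
  have hconst := lienard_mono_const hT hmono (fun t => by simp [(hper t).2])
  have hyconst : ∀ t, y t = y 0 := fun t => by have := hconst t 0; simpa using this
  have hg0 : ∀ t, g (x t) = 0 := fun t => by
    have h1 : HasDerivAt y 0 t := by
      have hy : y = fun _ => y 0 := funext hyconst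
      rw [hy]; exact hasDerivAt_const _ _
    have := (hy' t).unique h1
    linarith
  have hx0 : ∀ t, x t = 0 := fun t => by
    rcases eq_or_lt_of_le (h t) with he | hl
    · exact he.symm
    · exact absurd (hg0 t) (ne_of_gt (gpos _ hl))
  have hy0 : ∀ t, y t = 0 := fun t => by
    have h1 : HasDerivAt x 0 t := by
      have hx : x = fun _ => (0:ℝ) := funext hx0
      rw [hx]; exact hasDerivAt_const _ _
    have := (hx' t).unique h1
    rw [hx0 t, hF0] at this
    linarith
  obtain ⟨t, s, hne⟩ := hnc
  exact hne (by rw [hx0, hy0, hx0, hy0])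


/-- `(x, y)` is a solution of the Liénard system `ẋ = y − F(x)`, `ẏ = −g(x)`. -/
def IsLienardSolution (F g : ℝ → ℝ) (x y : ℝ → ℝ) : Prop :=
  ∀ t, HasDerivAt x (y t - F (x t)) t ∧ HasDerivAt y (-(g (x t))) t

/-- `(x, y)` is a nonconstant periodic solution of the Liénard system. -/
def IsNonconstPeriodicLienardSolution (F g : ℝ → ℝ) (x y : ℝ → ℝ) : Prop :=
  IsLienardSolution F g x y ∧
    (∃ T > (0 : ℝ), ∀ t, x (t + T) = x t ∧ y (t + T) = y t) ∧
    (∃ t s, (x t, y t) ≠ (x s, y s))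

/-- The orbit of a solution curve. -/
def lienardOrbit (x y : ℝ → ℝ) : Set (ℝ × ℝ) :=
  Set.range fun t => (x t, y t)

/-- Corollary to Liénard's Theorem: under the Liénard hypotheses, the orbit `Φ`
of any nonconstant periodic solution is symmetric about the origin and contains
a point `(x₂, y₂)` with `x₂ > a`. -/
theorem lienard_orbit_symmetric_and_exceeds
    (F g : ℝ → ℝ) (hF : ContDiff ℝ 1 F) (hg : ContDiff ℝ 1 g)
    (hFodd : ∀ x, F (-x) = -F x) (hgodd : ∀ x, g (-x) = -g x)
    (hgpos : ∀ x ≠ (0 : ℝ), 0 < x * g x)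
    (hF0 : F 0 = 0) (hF'0 : deriv F 0 < 0)
    (a : ℝ) (ha : 0 < a)
    (hFzero : ∀ x > (0 : ℝ), (F x = 0 ↔ x = a))
    (hFmono : StrictMonoOn F (Set.Ici a))
    (hFtop : Tendsto F atTop atTop) :
    ∀ x y, IsNonconstPeriodicLienardSolution F g x y →
      (∀ q ∈ lienardOrbit x y, (-q.1, -q.2) ∈ lienardOrbit x y) ∧
      (∃ q ∈ lienardOrbit x y, q.1 > a) := by

  intro x y hsol
  obtain ⟨hS, ⟨T, hT, hper⟩, hnc⟩ := hsol
  have hx' : ∀ t, HasDerivAt x (y t - F (x t)) t := fun t => (hS t).1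
  have hy' : ∀ t, HasDerivAt y (-(g (x t))) t := fun t => (hS t).2
  have hxc : Continuous x := by
    rw [continuous_iff_continuousAt]; exact fun t => (hx' t).continuousAt
  have hyc : Continuous y := by
    rw [continuous_iff_continuousAt]; exact fun t => (hy' t).continuousAt
  have g0 : g 0 = 0 := by have := hgodd 0; simp only [neg_zero] at this; linarith
  have gpos : ∀ w : ℝ, 0 < w → 0 < g w := by
    intro w hw
    by_contra hle
    push_neg at hle
    have := hgpos w (ne_of_gt hw)
    nlinarith
  have gneg : ∀ w : ℝ, w < 0 → g w < 0 := by
    intro w hw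
    by_contra hle
    push_neg at hle
    have := hgpos w (ne_of_lt hw)
    nlinarith
  -- reflected solution
  have hu' : ∀ t, HasDerivAt (fun s => -x s) (-y t - F (-x t)) t := by
    intro t
    have h1 := (hx' t).neg
    exact h1.congr_deriv (by rw [hFodd]; ring)
  have hv' : ∀ t, HasDerivAt (fun s => -y s) (-(g (-x t))) t := by
    intro t
    have h1 := (hy' t).neg
    exact h1.congr_deriv (by rw [hgodd])
  -- window reduction
  have hwin : ∀ t, ∃ s ∈ Set.Icc 0 T, x s = x t ∧ y s = y t := by
    intro t
    set n : ℤ := ⌊t / T⌋ with hn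
    have h0 : 0 ≤ t - n * T := Int.sub_floor_div_mul_nonneg t hT
    have h1 : t - n * T < T := Int.sub_floor_div_mul_lt t hT
    have hxs := lienard_periodZ (fun t => (hper t).1) n (t - n * T)
    have hys := lienard_periodZ (fun t => (hper t).2) n (t - n * T)
    rw [sub_add_cancel] at hxs hys
    exact ⟨t - n * T, ⟨h0, h1.le⟩, hxs.symm, hys.symm⟩
  -- boundedness of the trajectory
  obtain ⟨tm, htmm, htmmax⟩ := isCompact_Icc.exists_isMaxOn (Set.nonempty_Icc.mpr hT.le)
    ((hxc.prodMk hyc).norm.continuousOn (s := Set.Icc 0 T))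
  set R := ‖(x tm, y tm)‖ with hR
  have hRb : ∀ t, ‖(x t, y t)‖ ≤ R := by
    intro t
    obtain ⟨s, hs, hsx, hsy⟩ := hwin t
    have := htmmax hs
    simp only [Set.mem_setOf_eq] at this
    rw [← hsx, ← hsy]
    exact this
  have hR0 : 0 ≤ R := le_trans (norm_nonneg _) (hRb 0)
  -- uniqueness of solutions
  have funiq : ∀ u v : ℝ → ℝ, (∀ t, HasDerivAt u (v t - F (u t)) t) →
      (∀ t, HasDerivAt v (-(g (u t))) t) → (∀ t, ‖(u t, v t)‖ ≤ R) →
      ∀ t₂, x t₂ = u t₂ → y t₂ = v t₂ → ∀ t, x t = u t ∧ y t = v t := by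
    intro u v hu hv hub t₂ hxe hye t
    set fv : ℝ × ℝ → ℝ × ℝ := fun p => (p.2 - F p.1, -(g p.1)) with hfv
    have hfvC : ContDiff ℝ 1 fv :=
      (contDiff_snd.sub (hF.comp contDiff_fst)).prodMk ((hg.comp contDiff_fst).neg)
    obtain ⟨C, hC⟩ := (isCompact_closedBall (0 : ℝ × ℝ) R).exists_bound_of_continuousOn
      (hfvC.continuous_fderiv one_ne_zero).continuousOn
    set K : NNReal := ⟨max C 0, le_max_right _ _⟩ with hK
    have hlip : LipschitzOnWith K fv (Metric.closedBall 0 R) := by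
      refine Convex.lipschitzOnWith_of_nnnorm_fderiv_le
        (fun p _ => (hfvC.differentiable one_ne_zero).differentiableAt)
        (fun p hp => ?_) (convex_closedBall _ _)
      have h1 : ‖fderiv ℝ fv p‖ ≤ max C 0 := le_trans (hC p hp) (le_max_left _ _)
      rw [← NNReal.coe_le_coe]
      rw [coe_nnnorm]
      exact h1
    have hmemx : ∀ s : ℝ, (x s, y s) ∈ Metric.closedBall (0 : ℝ × ℝ) R := fun s => by
      rw [Metric.mem_closedBall, dist_zero_right]; exact hRb s
    have hmemu : ∀ s : ℝ, (u s, v s) ∈ Metric.closedBall (0 : ℝ × ℝ) R := fun s => by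
      rw [Metric.mem_closedBall, dist_zero_right]; exact hub s
    have ht₂ : t₂ ∈ Set.Ioo (min t t₂ - 1) (max t t₂ + 1) := by
      constructor
      · have := min_le_right t t₂; linarith
      · have := le_max_right t t₂; linarith
    have hxcont : ContinuousOn (fun s => (x s, y s)) (Set.Icc (min t t₂ - 1) (max t t₂ + 1)) :=
      (hxc.prodMk hyc).continuousOn
    have hucont : ContinuousOn (fun s => (u s, v s)) (Set.Icc (min t t₂ - 1) (max t t₂ + 1)) := by
      have hcu : Continuous u := by
        rw [continuous_iff_continuousAt]; exact fun s => (hu s).continuousAt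
      have hcv : Continuous v := by
        rw [continuous_iff_continuousAt]; exact fun s => (hv s).continuousAt
      exact (hcu.prodMk hcv).continuousOn
    have hEq := ODE_solution_unique_of_mem_Icc
      (v := fun _ p => fv p) (s := fun _ => Metric.closedBall 0 R) (K := K)
      (fun _ _ => hlip) ht₂ hxcont
      (fun s _ => ((hx' s).prodMk (hy' s)))
      (fun s _ => hmemx s) hucont
      (fun s _ => ((hu s).prodMk (hv s)))
      (fun s _ => hmemu s)
      (by rw [Prod.mk.injEq]; exact ⟨hxe, hye⟩)
    have htmem : t ∈ Set.Icc (min t t₂ - 1) (max t t₂ + 1) := by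
      constructor
      · have := min_le_left t t₂; linarith
      · have := le_max_left t t₂; linarith
    have := hEq htmem
    rw [Prod.mk.injEq] at this
    exact this
  -- the equilibrium is not on the orbit
  have noeq : ∀ t, ¬(x t = 0 ∧ y t = 0) := by
    rintro t₂ ⟨hx2, hy2⟩
    have h0 := funiq (fun _ => 0) (fun _ => 0)
      (fun t => by simpa [hF0] using hasDerivAt_const t (0 : ℝ))
      (fun t => by simpa [g0] using hasDerivAt_const t (0 : ℝ))
      (fun t => by simpa using hR0) t₂ hx2 hy2
    obtain ⟨t, s, hne⟩ := hnc
    exact hne (by rw [(h0 t).1, (h0 t).2, (h0 s).1, (h0 s).2])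
  -- x takes both signs
  have hxneg : ∃ t, x t < 0 := lienard_half hF0 g0 gpos hx' hy' hT hper hnc
  have hxpos : ∃ t, 0 < x t := by
    obtain ⟨t, ht⟩ := lienard_half (x := fun s => -x s) (y := fun s => -y s) hF0 g0 gpos
      hu' hv' hT (fun t => by constructor <;> simp [(hper t).1, (hper t).2])
      (by
        obtain ⟨t, s, hne⟩ := hnc
        exact ⟨t, s, fun hcq => by
          have h1 : -x t = -x s := congrArg Prod.fst hcq
          have h2 : -y t = -y s := congrArg Prod.snd hcq
          exact hne (by rw [Prod.mk.injEq]
                        exact ⟨by linarith, by linarith⟩)⟩)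
    exact ⟨t, by simpa using ht⟩
  -- a crossing of the y-axis exists in the window
  have hZne : (Set.Icc 0 T ∩ x ⁻¹' {0}).Nonempty := by
    obtain ⟨tp, htp⟩ := hxpos
    obtain ⟨tn, htn⟩ := hxneg
    have hz : ∃ z, x z = 0 := by
      rcases le_total tp tn with hh | hh
      · obtain ⟨z, _, hz⟩ := intermediate_value_Icc' hh hxc.continuousOn
          (Set.mem_Icc.mpr ⟨htn.le, htp.le⟩)
        exact ⟨z, hz⟩
      · obtain ⟨z, _, hz⟩ := intermediate_value_Icc hh hxc.continuousOn
          (Set.mem_Icc.mpr ⟨htn.le, htp.le⟩)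
        exact ⟨z, hz⟩
    obtain ⟨z, hz⟩ := hz
    obtain ⟨s, hs, hsx, _⟩ := hwin z
    exact ⟨s, hs, by rw [Set.mem_preimage, Set.mem_singleton_iff, hsx, hz]⟩
  have hZcpt : IsCompact (Set.Icc 0 T ∩ x ⁻¹' {0}) :=
    isCompact_Icc.inter_right (isClosed_singleton.preimage hxc)
  obtain ⟨t', ht'Z, ht'max⟩ := hZcpt.exists_isMaxOn hZne (hyc.abs.continuousOn)
  have hx't' : x t' = 0 := ht'Z.2
  have hyt'ne : y t' ≠ 0 := fun h => noeq t' ⟨hx't', h⟩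
  have hmaxall : ∀ t, x t = 0 → |y t| ≤ |y t'| := by
    intro t ht0
    obtain ⟨s, hsmem, hsx, hsy⟩ := hwin t
    rw [← hsy]
    exact ht'max ⟨hsmem, by rw [Set.mem_preimage, Set.mem_singleton_iff, hsx, ht0]⟩
  -- intersection of the orbit with its reflection
  obtain ⟨s₀, σ₀, hxsσ, hysσ⟩ : ∃ s σ, x s = -x σ ∧ y s = -y σ := by
    rcases hyt'ne.lt_or_gt with hneg' | hpos'
    · obtain ⟨s, σ, h1, h2⟩ := lienard_key (x := fun s => -x s) (y := fun s => -y s)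
        hF.continuous hF0 gpos gneg hu' hv' hT
        (fun t => by simp [(hper t).1])
        (fun t h => noeq t ⟨by simpa using h.1, by simpa using h.2⟩)
        t' (by simpa using hx't') (by simpa using hneg')
        (fun t h => by
          have := hmaxall t (by simpa using h)
          rw [abs_of_neg hneg'] at this
          simpa using this)
      refine ⟨s, σ, ?_, ?_⟩
      · have h1' : -x s = x σ := by simpa using h1
        linarith
      · have h2' : -y s = y σ := by simpa using h2
        linarith
    · exact lienard_key hF.continuous hF0 gpos gneg hx' hy' hT
        (fun t => (hper t).1) noeq t' hx't' hpos'
        (fun t h => by rw [← abs_of_pos hpos']; exact hmaxall t h)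
  -- symmetry of the orbit via uniqueness
  set c := σ₀ - s₀ with hc
  have husol : ∀ t, HasDerivAt (fun s => -x (s + c)) (-y (t + c) - F (-x (t + c))) t := by
    intro t
    have h1 : HasDerivAt x (y (t + c) - F (x (t + c))) (t + c) := hx' (t + c)
    have h2 := (h1.comp_add_const t c).neg
    exact h2.congr_deriv (by rw [hFodd]; ring)
  have hvsol : ∀ t, HasDerivAt (fun s => -y (s + c)) (-(g (-x (t + c)))) t := by
    intro t
    have h1 : HasDerivAt y (-(g (x (t + c)))) (t + c) := hy' (t + c)
    have h2 := (h1.comp_add_const t c).neg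
    exact h2.congr_deriv (by rw [hgodd])
  have hsame := funiq (fun s => -x (s + c)) (fun s => -y (s + c)) husol hvsol
    (fun t => by
      have : ((fun s => -x (s + c)) t, (fun s => -y (s + c)) t)
          = -((x (t + c), y (t + c)) : ℝ × ℝ) := rfl
      rw [this, norm_neg]
      exact hRb (t + c))
    s₀ (by show x s₀ = -x (s₀ + c); rw [show s₀ + c = σ₀ by rw [hc]; ring]; exact hxsσ)
    (by show y s₀ = -y (s₀ + c); rw [show s₀ + c = σ₀ by rw [hc]; ring]; exact hysσ)
  have hsym : ∀ t, x (t + c) = -x t ∧ y (t + c) = -y t := by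
    intro t
    obtain ⟨h1, h2⟩ := hsame t
    have h1' : x t = -x (t + c) := h1
    have h2' : y t = -y (t + c) := h2
    constructor <;> [linarith; linarith]
  constructor
  · rintro q ⟨t, rfl⟩
    exact ⟨t + c, by rw [Prod.mk.injEq]; exact ⟨(hsym t).1, (hsym t).2⟩⟩
  -- Part 2: the orbit exceeds `a`
  · by_contra hno
    push_neg at hno
    have hle : ∀ t, x t ≤ a := fun t => hno (x t, y t) ⟨t, rfl⟩
    have hge : ∀ t, -a ≤ x t := by
      intro t
      have := hle (t + c)
      rw [(hsym t).1] at this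
      linarith
    -- F is negative on (0, a)
    have hFa : F a = 0 := (hFzero a ha).mpr rfl
    have hFneg : ∀ w : ℝ, 0 < w → w < a → F w < 0 := by
      intro w hw hwa
      have hd : HasDerivAt F (deriv F 0) 0 := (hF.differentiable one_ne_zero 0).hasDerivAt
      have hslope := hasDerivAt_iff_tendsto_slope.mp hd
      have hev : ∀ᶠ v in 𝓝[>] (0:ℝ), slope F 0 v < 0 :=
        nhdsWithin_mono 0 (fun v (hv : v ∈ Set.Ioi 0) => ne_of_gt hv)
          (hslope.eventually (gt_mem_nhds hF'0))
      have hev2 : ∀ᶠ v in 𝓝[>] (0:ℝ), v < w :=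
        eventually_nhdsWithin_of_eventually_nhds (Filter.Tendsto.eventually_lt_const hw tendsto_id)
      have hev3 : ∀ᶠ v in 𝓝[>] (0:ℝ), 0 < v := eventually_mem_nhdsWithin
      obtain ⟨v, hvs, hvw, hv0⟩ := (hev.and (hev2.and hev3)).exists
      have hFv : F v < 0 := by
        have : slope F 0 v = F v / v := by rw [slope_def_field]; simp [hF0]
        rw [this] at hvs
        exact (div_neg_iff.mp hvs).resolve_left (fun h => absurd hv0 (not_lt.mpr h.2.le)) |>.1
      by_contra hge'
      push_neg at hge'
      rcases eq_or_lt_of_le hge' with he | hl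
      · exact absurd ((hFzero w hw).mp he.symm) (ne_of_lt hwa)
      · obtain ⟨z, hzmem, hz0⟩ := intermediate_value_Icc hvw.le hF.continuous.continuousOn
          (Set.mem_Icc.mpr ⟨hFv.le, hl.le⟩)
        have hz : z = a := (hFzero z (lt_of_lt_of_le hv0 hzmem.1)).mp hz0
        rw [hz] at hzmem
        linarith [hzmem.2]
    -- energy function
    set G : ℝ → ℝ := fun w => ∫ u in (0:ℝ)..w, g u with hG
    have hGd : ∀ w, HasDerivAt G (g w) w := fun w =>
      (hg.continuous.integral_hasStrictDerivAt 0 w).hasDerivAt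
    set E : ℝ → ℝ := fun t => y t ^ 2 / 2 + G (x t) with hE
    have hEd : ∀ t, HasDerivAt E (-(g (x t)) * F (x t)) t := by
      intro t
      have h1 := ((hy' t).pow 2).div_const 2
      have h2 := (hGd (x t)).comp t (hx' t)
      have h3 := h1.add h2
      exact h3.congr_deriv (by ring)
    have hEnonneg : ∀ t, 0 ≤ -(g (x t)) * F (x t) := by
      intro t
      rcases lt_trichotomy (x t) 0 with hlt | heq | hgt
      · have hg1 : g (x t) < 0 := gneg _ hlt
        have hF1 : 0 ≤ F (x t) := by
          have hxx : F (x t) = -F (-x t) := by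
            rw [← hFodd]; simp
          rw [hxx]
          rcases eq_or_lt_of_le (hge t) with he | hl
          · rw [show -x t = a by linarith, hFa]; simp
          · have := hFneg (-x t) (by linarith) (by linarith)
            linarith
        exact mul_nonneg (by linarith) hF1
      · rw [heq, g0]; simp
      · have hg1 : 0 < g (x t) := gpos _ hgt
        have hF1 : F (x t) ≤ 0 := by
          rcases eq_or_lt_of_le (hle t) with he | hl
          · rw [he, hFa]
          · exact (hFneg _ hgt hl).le
        nlinarith
    have hEmono : Monotone E := by
      apply monotone_of_deriv_nonneg (fun t => (hEd t).differentiableAt)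
      intro t
      rw [(hEd t).deriv]
      exact hEnonneg t
    have hEper : ∀ t, E (t + T) = E t := by
      intro t
      simp only [hE, (hper t).1, (hper t).2]
    have hEconst := lienard_mono_const hT hEmono hEper
    have hEzero : ∀ t, -(g (x t)) * F (x t) = 0 := by
      intro t
      have h1 : HasDerivAt E 0 t := by
        have hEc : E = fun _ => E 0 := funext fun s => hEconst s 0
        rw [hEc]; exact hasDerivAt_const _ _
      exact (hEd t).unique h1
    have hxval : ∀ t, x t = -a ∨ x t = 0 ∨ x t = a := by
      intro t
      rcases lt_trichotomy (x t) 0 with hlt | heq | hgt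
      · left
        have hg1 : g (x t) ≠ 0 := ne_of_lt (gneg _ hlt)
        have hF1 : F (x t) = 0 := by
          have := hEzero t
          rcases mul_eq_zero.mp this with h | h
          · exact absurd (by linarith [neg_eq_zero.mp h] : g (x t) = 0) hg1
          · exact h
        have : F (-x t) = 0 := by rw [hFodd]; rw [hF1]; ring
        have := (hFzero (-x t) (by linarith)).mp this
        linarith
      · right; left; exact heq
      · right; right
        have hg1 : g (x t) ≠ 0 := ne_of_gt (gpos _ hgt)
        have hF1 : F (x t) = 0 := by
          have := hEzero t
          rcases mul_eq_zero.mp this with h | h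
          · exact absurd (by linarith [neg_eq_zero.mp h] : g (x t) = 0) hg1
          · exact h
        exact (hFzero _ hgt).mp hF1
    have hxconst : ∀ s t : ℝ, x s = x t := by
      by_contra hcon
      push_neg at hcon
      obtain ⟨s, t, hst⟩ := hcon
      have key : ∀ s t : ℝ, x s < x t → False := by
        intro s t hlt
        have hinf : (Set.Ioo (x s) (x t)).Infinite := Set.Ioo_infinite hlt
        obtain ⟨w, hwmem, hwnot⟩ :=
          (hinf.diff (((Set.finite_singleton a).insert 0).insert (-a))).nonempty
        have hw : w ∈ Set.Icc (x s) (x t) := ⟨hwmem.1.le, hwmem.2.le⟩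
        obtain ⟨z, hz⟩ := intermediate_value_univ s t hxc hw
        rcases hxval z with h | h | h <;> rw [hz] at h <;>
          exact hwnot (by rw [h]; simp)
      rcases lt_or_gt_of_ne hst with h | h
      · exact key s t h
      · exact key t s h
    have hxv : ∀ t, x t = x 0 := fun t => hxconst t 0
    have hyv : ∀ t, y t = F (x 0) := by
      intro t
      have h1 : HasDerivAt x 0 t := by
        have hxx : x = fun _ => x 0 := funext hxv
        rw [hxx]; exact hasDerivAt_const _ _
      have := (hx' t).unique h1
      rw [hxv t] at this
      linarith
    have hgz : g (x 0) = 0 := by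
      have h1 : HasDerivAt y 0 0 := by
        have hyy : y = fun _ => F (x 0) := funext hyv
        rw [hyy]; exact hasDerivAt_const _ _
      have := (hy' 0).unique h1
      linarith
    have hx00 : x 0 = 0 := by
      by_contra hne
      have := hgpos (x 0) hne
      rw [hgz] at this
      simp at this
    obtain ⟨t, s, hne⟩ := hnc
    exact hne (by rw [hxv t, hxv s, hyv t, hyv s])
end

section
/- (Failure of the relaxed aCBF condition to ensure safety.) Let α : ℝ → ℝ be continuously differentiable, strictly monotonically increasing, with α(0) = 0, α(r) → ∞ as r → ∞ and α(r) → −∞ as r → −∞, and let γ > 0. Consider the planar system ẋ = θ̃ + (1/2) x α(1 − x²), θ̃̇ = −2γ x, and set h(x, θ̃) = 1 − x² − θ̃²/(2γ). Then for every global solution (x(t), θ̃(t)) defined on [0, ∞) with initial condition satisfying h(x(0), θ̃(0)) ≥ 0 and (x(0), θ̃(0)) ≠ (0, 0), there exists t ≥ 0 such that x(t)² > 1; i.e., every such trajectory leaves the state safe set S = {x ∈ ℝ : x² ≤ 1}. -/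
open Filter Real

lemma bnd_mul {a b A B : ℝ} (ha : |a| ≤ A) (hb : |b| ≤ B) : |a * b| ≤ A * B := by
  rw [abs_mul]
  exact mul_le_mul ha hb (abs_nonneg b) ((abs_nonneg a).trans ha)

lemma le_of_deriv_ge {f : ℝ → ℝ} {m a b : ℝ} (hab : a ≤ b)
    (h : ∀ t ∈ Set.Icc a b, ∃ d, HasDerivAt f d t ∧ m ≤ d) :
    f a + m * (b - a) ≤ f b := by
  have hmono : MonotoneOn (fun t => f t - m * t) (Set.Icc a b) := by
    apply monotoneOn_of_deriv_nonneg (convex_Icc a b)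
    · intro t ht
      obtain ⟨d, hd, _⟩ := h t ht
      exact ((hd.sub ((hasDerivAt_id t).const_mul m)).continuousAt).continuousWithinAt
    · intro t ht
      obtain ⟨d, hd, _⟩ := h t (interior_subset ht)
      exact ((hd.sub ((hasDerivAt_id t).const_mul m)).differentiableAt).differentiableWithinAt
    · intro t ht
      obtain ⟨d, hd, hmd⟩ := h t (interior_subset ht)
      have hg : HasDerivAt (fun t => f t - m * t) (d - m * 1) t :=
        hd.sub ((hasDerivAt_id t).const_mul m)
      rw [hg.deriv]; linarith
  have := hmono (Set.left_mem_Icc.2 hab) (Set.right_mem_Icc.2 hab) hab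
  simp only at this
  linarith

lemma escape_aux {α : ℝ → ℝ} (hmono : Monotone α) (hα0 : α 0 = 0)
    {γ : ℝ} (hγ : 0 < γ) {x θt : ℝ → ℝ}
    (hx : ∀ t, 0 ≤ t →
      HasDerivAt x (θt t + (1 / 2) * x t * α (1 - (x t) ^ 2)) t)
    (hθt : ∀ t, 0 ≤ t → HasDerivAt θt (-(2 * γ * x t)) t)
    (hx2 : ∀ t, 0 ≤ t → x t ^ 2 ≤ 1)
    {t₀ : ℝ} (ht₀ : 0 ≤ t₀) (hbig : 2 * γ + α 1 / 2 + 3 < θt t₀) : False := by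
  have hA : ∀ t, 0 ≤ t → 0 ≤ α (1 - x t ^ 2) ∧ α (1 - x t ^ 2) ≤ α 1 := by
    intro t ht
    constructor
    · rw [← hα0]; exact hmono (by nlinarith [hx2 t ht])
    · exact hmono (by nlinarith [hx2 t ht])
  have hθlow : ∀ s ∈ Set.Icc t₀ (t₀ + 1), θt t₀ - 2 * γ * (s - t₀) ≤ θt s := by
    intro s hs
    have key : (fun u => θt u + 2 * γ * u) t₀ + 0 * (s - t₀) ≤ (fun u => θt u + 2 * γ * u) s := by
      apply le_of_deriv_ge hs.1
      intro u hu
      have hu0 : 0 ≤ u := ht₀.trans hu.1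
      refine ⟨-(2 * γ * x u) + 2 * γ * 1, ?_, ?_⟩
      · exact (hθt u hu0).add ((hasDerivAt_id u).const_mul (2 * γ))
      · have h6 : x u ≤ 1 := by nlinarith [hx2 u hu0, sq_nonneg (x u - 1)]
        nlinarith [h6, hγ]
    simp only at key
    linarith
  have hkey : x t₀ + 3 * (t₀ + 1 - t₀) ≤ x (t₀ + 1) := by
    apply le_of_deriv_ge (by linarith)
    intro u hu
    have hu0 : 0 ≤ u := ht₀.trans hu.1
    refine ⟨θt u + (1 / 2) * x u * α (1 - x u ^ 2), hx u hu0, ?_⟩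
    have h1 := hθlow u hu
    have h2 := (hA u hu0).1
    have h3 := (hA u hu0).2
    have h4 : x u ^ 2 ≤ 1 := hx2 u hu0
    have h5 : -1 ≤ x u := by nlinarith
    have h6 : x u ≤ 1 := by nlinarith [sq_nonneg (x u - 1)]
    have h7 : u - t₀ ≤ 1 := by linarith [hu.2]
    have h8 : (1 / 2) * x u * α (1 - x u ^ 2) ≥ -(α 1 / 2) := by nlinarith
    have h7' : 2 * γ * (u - t₀) ≤ 2 * γ := by nlinarith [hu.1]
    linarith
  have h9 : -1 ≤ x t₀ := by nlinarith [hx2 t₀ ht₀]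
  have h10 := hx2 (t₀ + 1) (by linarith)
  nlinarith

set_option maxHeartbeats 2000000 in
/-- Failure of the relaxed aCBF condition to ensure safety (Section V): for
the closed-loop planar system `ẋ = θ̃ + (1/2) x α(1−x²)`, `θ̃̇ = −2γx` with `α`
a continuously differentiable extended class-K∞ function and `γ > 0`, every
global solution starting in the 0-superlevel set of the composite barrier
`h(x,θ̃) = 1 − x² − θ̃²/(2γ)` other than the origin eventually leaves the state
safe set `{x : x² ≤ 1}`. -/
theorem relaxed_acbf_condition_unsafe
    (α : ℝ → ℝ) (hα : ContDiff ℝ 1 α) (hαmono : StrictMono α)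
    (hα0 : α 0 = 0)
    (hαtop : Tendsto α atTop atTop) (hαbot : Tendsto α atBot atBot)
    (γ : ℝ) (hγ : 0 < γ)
    (x θt : ℝ → ℝ)
    (hx : ∀ t, 0 ≤ t →
      HasDerivAt x (θt t + (1 / 2) * x t * α (1 - (x t) ^ 2)) t)
    (hθt : ∀ t, 0 ≤ t → HasDerivAt θt (-(2 * γ * x t)) t)
    (hinit : 0 ≤ 1 - (x 0) ^ 2 - (θt 0) ^ 2 / (2 * γ))
    (hne : (x 0, θt 0) ≠ (0, 0)) :
    ∃ t, 0 ≤ t ∧ (x t) ^ 2 > 1 := by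
  by_contra hcon
  push_neg at hcon
  have hx2 : ∀ t, 0 ≤ t → x t ^ 2 ≤ 1 := fun t ht => hcon t ht
  have hmono := hαmono.monotone
  obtain ⟨α1, hα1def⟩ : ∃ α1 : ℝ, α1 = α 1 := ⟨_, rfl⟩
  have hα1 : 0 < α1 := by
    rw [hα1def]
    have := hαmono (show (0:ℝ) < 1 by norm_num)
    rwa [hα0] at this
  -- bound on θt
  obtain ⟨R, hRdef⟩ : ∃ R : ℝ, R = 2 * γ + α1 / 2 + 3 := ⟨_, rfl⟩
  have hR0 : 0 < R := by rw [hRdef]; positivity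
  have hΘ : ∀ t, 0 ≤ t → |θt t| ≤ R := by
    intro t ht
    by_contra hcc
    push_neg at hcc
    rcases lt_abs.mp hcc with h | h
    · exact escape_aux hmono hα0 hγ hx hθt hx2 ht (by rw [hRdef, hα1def] at h; linarith)
    · refine escape_aux hmono hα0 hγ (x := fun s => -x s) (θt := fun s => -θt s)
        ?_ ?_ ?_ ht ?_
      · intro s hs
        have h1 := (hx s hs).neg
        refine h1.congr_deriv ?_
        simp only [neg_sq]
        ring
      · intro s hs
        have h1 := (hθt s hs).neg
        refine h1.congr_deriv ?_
        ring
      · intro s hs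
        simpa [neg_sq] using hx2 s hs
      · rw [hRdef, hα1def] at h
        linarith
  -- basic pointwise facts
  have hXabs : ∀ t, 0 ≤ t → |x t| ≤ 1 := by
    intro t ht
    have := hx2 t ht
    rw [abs_le]
    constructor <;> nlinarith [sq_nonneg (x t - 1), sq_nonneg (x t + 1)]
  have hA01 : ∀ t, 0 ≤ t → 0 ≤ α (1 - x t ^ 2) ∧ α (1 - x t ^ 2) ≤ α1 := by
    intro t ht
    constructor
    · rw [← hα0]; exact hmono (by nlinarith [hx2 t ht])
    · rw [hα1def]; exact hmono (by nlinarith [hx2 t ht])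
  obtain ⟨M, hMdef⟩ : ∃ M : ℝ, M = R + α1 / 2 := ⟨_, rfl⟩
  have hM0 : 0 < M := by rw [hMdef]; positivity
  have hXD : ∀ t, 0 ≤ t → |θt t + (1 / 2) * x t * α (1 - x t ^ 2)| ≤ M := by
    intro t ht
    have h1 := hΘ t ht
    have h2 := hXabs t ht
    have h3 := (hA01 t ht).1
    have h4 := (hA01 t ht).2
    have h5 : |(1 / 2) * x t * α (1 - x t ^ 2)| ≤ α1 / 2 := by
      have : |(1 / 2) * x t * α (1 - x t ^ 2)| = (1/2) * |x t| * |α (1 - x t ^ 2)| := by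
        rw [abs_mul, abs_mul]; norm_num
      rw [this, abs_of_nonneg h3]
      nlinarith [abs_nonneg (x t)]
    calc |θt t + (1 / 2) * x t * α (1 - x t ^ 2)|
        ≤ |θt t| + |(1 / 2) * x t * α (1 - x t ^ 2)| := abs_add_le _ _
      _ ≤ R + α1 / 2 := add_le_add h1 h5
      _ = M := hMdef.symm
  -- V₀ and lower bound for V
  obtain ⟨V0, hV0def⟩ : ∃ V0 : ℝ, V0 = γ * x 0 ^ 2 + θt 0 ^ 2 / 2 := ⟨_, rfl⟩
  have hV0 : 0 < V0 := by
    have hne' : x 0 ≠ 0 ∨ θt 0 ≠ 0 := by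
      by_contra hh
      push_neg at hh
      exact hne (by rw [hh.1, hh.2])
    rw [hV0def]
    rcases hne' with h | h
    · have : 0 < x 0 ^ 2 := by positivity
      nlinarith [sq_nonneg (θt 0)]
    · have : 0 < θt 0 ^ 2 := by positivity
      nlinarith [sq_nonneg (x 0), mul_nonneg hγ.le (sq_nonneg (x 0))]
  have hVlow : ∀ t, 0 ≤ t → V0 ≤ γ * x t ^ 2 + θt t ^ 2 / 2 := by
    intro t ht
    have key : (fun s => γ * x s ^ 2 + θt s ^ 2 / 2) 0 + 0 * (t - 0)
        ≤ (fun s => γ * x s ^ 2 + θt s ^ 2 / 2) t := by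
      apply le_of_deriv_ge (f := fun s => γ * x s ^ 2 + θt s ^ 2 / 2) ht
      intro u hu
      have hu0 : 0 ≤ u := hu.1
      refine ⟨γ * ((2 : ℕ) * x u ^ (2 - 1) * (θt u + (1 / 2) * x u * α (1 - x u ^ 2)))
        + ((2 : ℕ) * θt u ^ (2 - 1) * (-(2 * γ * x u))) / 2, ?_, ?_⟩
      · exact (((hx u hu0).pow 2).const_mul γ).add (((hθt u hu0).pow 2).div_const 2)
      · have h2 := (hA01 u hu0).1
        have heq : γ * ((2 : ℕ) * x u ^ (2 - 1) * (θt u + (1 / 2) * x u * α (1 - x u ^ 2)))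
            + ((2 : ℕ) * θt u ^ (2 - 1) * (-(2 * γ * x u))) / 2
            = γ * x u ^ 2 * α (1 - x u ^ 2) := by
          push_cast
          ring
        rw [heq]
        positivity
    simp only at key
    rw [hV0def]
    linarith
  -- constants
  obtain ⟨lam, hlamdef⟩ : ∃ lam : ℝ, lam = 8 * (γ + 1) / (3 * γ) := ⟨_, rfl⟩
  have hlam : 0 < lam := by rw [hlamdef]; positivity
  obtain ⟨k, hkdef⟩ : ∃ k : ℝ, k = 8 + 384 * lam * R * M := ⟨_, rfl⟩
  have hk8 : 8 ≤ k := by rw [hkdef]; linarith only [mul_pos (mul_pos hlam hR0) hM0]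
  have hk0 : 0 < k := by linarith
  obtain ⟨B, hBdef⟩ : ∃ B : ℝ, B = γ + R ^ 2 / 2 := ⟨_, rfl⟩
  have hB0 : 0 < B := by rw [hBdef]; positivity
  -- choose ε
  have hαcont : Continuous α := hα.continuous
  have hφcont : ContinuousAt (fun e : ℝ =>
      4 * γ * e ^ 2 + e * R * α1 / 2 + lam * (4 * γ * e + 3 * k * e ^ 2 * R * M)
        + R * α (2 * e)) 0 := by
    apply ContinuousAt.add
    · fun_prop
    · exact (continuous_const.mul (hαcont.comp (continuous_const.mul continuous_id))).continuousAt
  have hφ0 : (4 * γ * (0:ℝ) ^ 2 + 0 * R * α1 / 2 + lam * (4 * γ * 0 + 3 * k * 0 ^ 2 * R * M)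
      + R * α (2 * 0)) = 0 := by
    norm_num [hα0]
  obtain ⟨δ, hδ0, hδ⟩ := Metric.continuousAt_iff.mp hφcont (min V0 1) (by positivity)
  obtain ⟨ε, hεdef⟩ : ∃ ε : ℝ, ε = min (δ / 2) (1 / 2) := ⟨_, rfl⟩
  have hε0 : 0 < ε := by
    rw [hεdef]; exact lt_min (by linarith) (by norm_num)
  have hεhalf : ε ≤ 1 / 2 := by rw [hεdef]; exact min_le_right _ _
  have hφε : 4 * γ * ε ^ 2 + ε * R * α1 / 2 + lam * (4 * γ * ε + 3 * k * ε ^ 2 * R * M)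
      + R * α (2 * ε) < min V0 1 := by
    have hd : dist ε (0:ℝ) < δ := by
      rw [Real.dist_eq, sub_zero, abs_of_pos hε0]
      calc ε ≤ δ / 2 := by rw [hεdef]; exact min_le_left _ _
        _ < δ := by linarith
    have := hδ hd
    rw [Real.dist_eq, hφ0, sub_zero] at this
    exact lt_of_le_of_lt (le_abs_self _) this
  have hα2ε0 : 0 ≤ α (2 * ε) := by
    rw [← hα0]; exact hmono (by linarith)
  have hφεV : 4 * γ * ε ^ 2 + ε * R * α1 / 2 + lam * (4 * γ * ε + 3 * k * ε ^ 2 * R * M)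
      + R * α (2 * ε) < V0 := lt_of_lt_of_le hφε (min_le_left _ _)
  have hφε1 : 4 * γ * ε ^ 2 + ε * R * α1 / 2 + lam * (4 * γ * ε + 3 * k * ε ^ 2 * R * M)
      + R * α (2 * ε) < 1 := lt_of_lt_of_le hφε (min_le_right _ _)
  have hεA : 4 * γ * ε ^ 2 + ε * R * α1 / 2 + lam * (4 * γ * ε + 3 * k * ε ^ 2 * R * M) ≤ V0 := by
    have h1 : 0 ≤ R * α (2 * ε) := mul_nonneg hR0.le hα2ε0
    exact (le_add_of_nonneg_right h1).trans hφεV.le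
  have hεC : R * α (2 * ε) ≤ 1 := by
    have h1 : 0 ≤ 4 * γ * ε ^ 2 := by positivity
    have h2 : 0 ≤ ε * R * α1 / 2 := by positivity
    have h3 : 0 ≤ lam * (4 * γ * ε + 3 * k * ε ^ 2 * R * M) := by positivity
    have h0 : 0 ≤ 4 * γ * ε ^ 2 + ε * R * α1 / 2 + lam * (4 * γ * ε + 3 * k * ε ^ 2 * R * M) := by
      linarith
    exact (le_add_of_nonneg_left h0).trans hφε1.le
  have hαε : 0 < α ε := by
    rw [← hα0]; exact hαmono hε0
  obtain ⟨c, hcdef⟩ : ∃ c : ℝ, c = (1 + 2 * γ + R * α1 / 2 + lam * (4 * γ + 3 * k * R * M)) / (γ * ε ^ 2 * α ε)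
    := ⟨_, rfl⟩
  have hc0 : 0 < c := by
    rw [hcdef]
    apply div_pos (by positivity) (by positivity)
  have hcprop : c * (γ * ε ^ 2 * α ε) = 1 + 2 * γ + R * α1 / 2 + lam * (4 * γ + 3 * k * R * M) := by
    rw [hcdef]
    exact div_mul_cancel₀ _ (by positivity : (0:ℝ) < γ * ε ^ 2 * α ε).ne'
  obtain ⟨ρ, hρdef⟩ : ∃ ρ : ℝ, ρ = min V0 1 := ⟨_, rfl⟩
  have hρ0 : 0 < ρ := by rw [hρdef]; exact lt_min hV0 (by norm_num)
  have hρV0 : ρ ≤ V0 := by rw [hρdef]; exact min_le_left _ _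
  have hρ1 : ρ ≤ 1 := by rw [hρdef]; exact min_le_right _ _
  -- the auxiliary function Z
  obtain ⟨Z, hZdef⟩ : ∃ Z : ℝ → ℝ, Z = fun s => x s * θt s + lam * (-(θt s) * arctan (k * x s ^ 3))
    + c * (γ * x s ^ 2 + θt s ^ 2 / 2) := ⟨_, rfl⟩
  obtain ⟨Zb, hZbdef⟩ : ∃ Zb : ℝ, Zb = 1 * R + lam * (R * 2) + c * B := ⟨_, rfl⟩
  have hZb0 : 0 < Zb := by
    rw [hZbdef]
    have h1 := mul_pos hlam (mul_pos hR0 two_pos)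
    have h2 := mul_pos hc0 hB0
    linarith only [h1, h2, hR0]
  have harctan2 : ∀ y : ℝ, |arctan y| ≤ 2 := by
    intro y
    have h1 := arctan_lt_pi_div_two y
    have h2 := neg_pi_div_two_lt_arctan y
    have h3 := pi_le_four
    rw [abs_le]
    constructor <;> linarith
  have hZbound : ∀ t, 0 ≤ t → |Z t| ≤ Zb := by
    intro t ht
    have h1 : |x t * θt t| ≤ 1 * R := bnd_mul (hXabs t ht) (hΘ t ht)
    have h2 : |lam * (-(θt t) * arctan (k * x t ^ 3))| ≤ lam * (R * 2) := by
      rw [abs_mul, abs_of_pos hlam]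
      have : |(-(θt t)) * arctan (k * x t ^ 3)| ≤ R * 2 := by
        apply bnd_mul _ (harctan2 _)
        rw [abs_neg]; exact hΘ t ht
      exact mul_le_mul_of_nonneg_left this hlam.le
    have h3 : |c * (γ * x t ^ 2 + θt t ^ 2 / 2)| ≤ c * B := by
      rw [abs_mul, abs_of_pos hc0]
      apply mul_le_mul_of_nonneg_left _ hc0.le
      have hΘ2 : θt t ^ 2 ≤ R ^ 2 := by
        have h5 := abs_le.mp (hΘ t ht)
        nlinarith only [h5.1, h5.2]
      have hx2' := hx2 t ht
      have h4 : γ * x t ^ 2 ≤ γ * 1 := mul_le_mul_of_nonneg_left hx2' hγ.le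
      rw [abs_of_nonneg (by positivity)]
      rw [hBdef]
      linarith only [hΘ2, h4]
    have habs : |x t * θt t + lam * (-(θt t) * arctan (k * x t ^ 3))
          + c * (γ * x t ^ 2 + θt t ^ 2 / 2)| ≤ 1 * R + lam * (R * 2) + c * B :=
      ((abs_add_le _ _).trans (add_le_add_left (abs_add_le _ _) _)).trans
        (add_le_add (add_le_add h1 h2) h3)
    rw [hZdef, hZbdef]
    exact habs
  -- derivative of Z is at least ρ
  have hZderiv : ∀ T, 0 ≤ T → ∀ t ∈ Set.Icc 0 T, ∃ d, HasDerivAt Z d t ∧ ρ ≤ d := by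
    intro T hT t htmem
    have ht : 0 ≤ t := htmem.1
    have hdx := hx t ht
    have hdθ := hθt t ht
    have hZd := ((hdx.mul hdθ).add ((hdθ.neg.mul (((hdx.pow 3).const_mul k).arctan)).const_mul
      lam)).add (((((hdx.pow 2).const_mul γ)).add ((hdθ.pow 2).div_const 2)).const_mul c)
    have hmain : ρ ≤ θt t ^ 2 + 1 / 2 * (x t * θt t * α (1 - x t ^ 2)) - 2 * γ * x t ^ 2
        + lam * (2 * γ) * (x t * arctan (k * x t ^ 3))
        - lam * (θt t * (1 / (1 + (k * x t ^ 3) ^ 2)) * (k * 3) * x t ^ 2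
            * (θt t + 1 / 2 * x t * α (1 - x t ^ 2)))
        + c * γ * (x t ^ 2 * α (1 - x t ^ 2)) := by
      have hX2 : x t ^ 2 ≤ 1 := hx2 t ht
      have hXa : |x t| ≤ 1 := hXabs t ht
      have hΘa : |θt t| ≤ R := hΘ t ht
      have hA0 : 0 ≤ α (1 - x t ^ 2) := (hA01 t ht).1
      have hAub : α (1 - x t ^ 2) ≤ α1 := (hA01 t ht).2
      have hXDa : |θt t + 1 / 2 * x t * α (1 - x t ^ 2)| ≤ M := hXD t ht
      have hden1 : (1:ℝ) ≤ 1 + (k * x t ^ 3) ^ 2 := by nlinarith only [sq_nonneg (k * x t ^ 3)]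
      have hdenpos : (0:ℝ) < 1 + (k * x t ^ 3) ^ 2 := by linarith only [hden1]
      have hinva : |1 / (1 + (k * x t ^ 3) ^ 2)| ≤ 1 := by
        rw [abs_of_pos (by positivity), div_le_one hdenpos]
        exact hden1
      have hcS4 : 0 ≤ c * γ * (x t ^ 2 * α (1 - x t ^ 2)) := by positivity
      have hk3a : |k * 3| ≤ k * 3 := le_of_eq (abs_of_pos (by positivity))
      rcases le_or_gt (x t ^ 2) (ε ^ 2) with hcaseA | hc1
      · -- region |x| ≤ ε
        have hXε : |x t| ≤ ε := by
          rw [abs_le]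
          constructor <;> nlinarith only [hcaseA, hε0, sq_nonneg (x t - ε), sq_nonneg (x t + ε)]
        have hT1 : |x t * θt t * α (1 - x t ^ 2)| ≤ ε * R * α1 :=
          bnd_mul (bnd_mul hXε hΘa) (by rw [abs_of_nonneg hA0]; exact hAub)
        have hT2 : |x t * arctan (k * x t ^ 3)| ≤ ε * 2 := bnd_mul hXε (harctan2 _)
        have hT3 : |θt t * (1 / (1 + (k * x t ^ 3) ^ 2)) * (k * 3) * x t ^ 2
            * (θt t + 1 / 2 * x t * α (1 - x t ^ 2))| ≤ R * 1 * (k * 3) * ε ^ 2 * M := by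
          refine bnd_mul (bnd_mul (bnd_mul (bnd_mul hΘa hinva) hk3a) ?_) hXDa
          rw [abs_of_nonneg (sq_nonneg (x t))]
          exact hcaseA
        have hVl := hVlow t ht
        have hΘsq : 2 * V0 - 2 * γ * x t ^ 2 ≤ θt t ^ 2 := by linarith only [hVl]
        have hγX2 : γ * x t ^ 2 ≤ γ * ε ^ 2 := mul_le_mul_of_nonneg_left hcaseA hγ.le
        have e1 : -(ε * R * α1) ≤ x t * θt t * α (1 - x t ^ 2) := (abs_le.mp hT1).1
        have e2 : -(ε * 2) ≤ x t * arctan (k * x t ^ 3) := (abs_le.mp hT2).1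
        have e2' : -(lam * (2 * γ) * (ε * 2)) ≤ lam * (2 * γ) * (x t * arctan (k * x t ^ 3)) := by
          have h := mul_le_mul_of_nonneg_left e2 (show (0:ℝ) ≤ lam * (2 * γ) by positivity)
          linarith only [h]
        have e3 : θt t * (1 / (1 + (k * x t ^ 3) ^ 2)) * (k * 3) * x t ^ 2
            * (θt t + 1 / 2 * x t * α (1 - x t ^ 2)) ≤ R * 1 * (k * 3) * ε ^ 2 * M :=
          (abs_le.mp hT3).2
        have e3' : lam * (θt t * (1 / (1 + (k * x t ^ 3) ^ 2)) * (k * 3) * x t ^ 2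
            * (θt t + 1 / 2 * x t * α (1 - x t ^ 2)))
            ≤ lam * (R * 1 * (k * 3) * ε ^ 2 * M) := mul_le_mul_of_nonneg_left e3 hlam.le
        linarith only [hcS4, e1, e2', e3', hΘsq, hγX2, hρV0, hεA]
      rcases le_or_gt ((1 - ε) ^ 2) (x t ^ 2) with hcaseC | hc2
      · -- region |x| ≥ 1 - ε ≥ 1/2
        have hq : (1:ℝ)/4 ≤ x t ^ 2 := by nlinarith only [hcaseC, hεhalf, hε0]
        have hS2 : 3 / 8 ≤ x t * arctan (k * x t ^ 3) := by
          rcases le_or_gt 0 (x t) with hX0 | hX0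
          · have hXhalf : 1 / 2 ≤ x t := by nlinarith only [hq, hX0]
            have hcube : 1 ≤ k * x t ^ 3 := by
              have p : (0:ℝ) ≤ x t - 1/2 := by linarith
              have q : (0:ℝ) ≤ x t := by linarith
              have hx3 : (1:ℝ)/8 ≤ x t ^ 3 := by
                nlinarith only [mul_nonneg (mul_nonneg p p) p, mul_nonneg q p]
              nlinarith only [hx3, hk8, mul_nonneg (by linarith : (0:ℝ) ≤ k - 8)
                (by linarith : (0:ℝ) ≤ x t ^ 3)]
            have harc : π / 4 ≤ arctan (k * x t ^ 3) := by
              rw [← arctan_one]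
              exact arctan_strictMono.monotone hcube
            nlinarith only [harc, hXhalf, pi_gt_three, arctan_lt_pi_div_two (k * x t ^ 3),
              pi_le_four]
          · have hXhalf : x t ≤ -(1 / 2) := by nlinarith only [hq, hX0]
            have hcube : k * x t ^ 3 ≤ -1 := by
              have p : (0:ℝ) ≤ -(1/2) - x t := by linarith
              have q : (0:ℝ) ≤ -x t := by linarith
              have hx3 : (1:ℝ)/8 ≤ -(x t ^ 3) := by
                nlinarith only [mul_nonneg (mul_nonneg p p) p, mul_nonneg q p]
              nlinarith only [hx3, hk8, mul_nonneg (by linarith : (0:ℝ) ≤ k - 8)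
                (by linarith : (0:ℝ) ≤ -(x t ^ 3))]
            have harc : arctan (k * x t ^ 3) ≤ -(π / 4) := by
              have h := arctan_strictMono.monotone hcube
              rwa [show (-1:ℝ) = -(1:ℝ) by norm_num, arctan_neg, arctan_one] at h
            nlinarith only [harc, hXhalf, pi_gt_three, neg_pi_div_two_lt_arctan (k * x t ^ 3),
              pi_le_four]
        have hAub2 : α (1 - x t ^ 2) ≤ α (2 * ε) := hmono (by nlinarith only [hcaseC, hε0, hεhalf])
        have hT1 : |x t * θt t * α (1 - x t ^ 2)| ≤ 1 * R * α (2 * ε) :=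
          bnd_mul (bnd_mul hXa hΘa) (by rw [abs_of_nonneg hA0]; exact hAub2)
        have e1 : -(1 * R * α (2 * ε)) ≤ x t * θt t * α (1 - x t ^ 2) := (abs_le.mp hT1).1
        have hinvC : |1 / (1 + (k * x t ^ 3) ^ 2)| ≤ 64 / k ^ 2 := by
          rw [abs_of_pos (by positivity), div_le_div_iff₀ hdenpos (by positivity)]
          have hX6 : 1 / 64 ≤ (x t ^ 3) ^ 2 := by
            have p : (0:ℝ) ≤ x t ^ 2 - 1/4 := by linarith
            have q : (0:ℝ) ≤ x t ^ 2 := sq_nonneg _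
            nlinarith only [mul_nonneg (mul_nonneg p p) p, mul_nonneg q p]
          nlinarith only [hX6, sq_nonneg k, hk0, mul_le_mul_of_nonneg_left hX6 (sq_nonneg k)]
        have hT3 : |θt t * (1 / (1 + (k * x t ^ 3) ^ 2)) * (k * 3) * x t ^ 2
            * (θt t + 1 / 2 * x t * α (1 - x t ^ 2))| ≤ R * (64 / k ^ 2) * (k * 3) * 1 * M := by
          refine bnd_mul (bnd_mul (bnd_mul (bnd_mul hΘa hinvC) hk3a) ?_) hXDa
          rw [abs_of_nonneg (sq_nonneg (x t))]
          exact hX2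
        have e3 : θt t * (1 / (1 + (k * x t ^ 3) ^ 2)) * (k * 3) * x t ^ 2
            * (θt t + 1 / 2 * x t * α (1 - x t ^ 2)) ≤ R * (64 / k ^ 2) * (k * 3) * 1 * M :=
          (abs_le.mp hT3).2
        have e3' : lam * (θt t * (1 / (1 + (k * x t ^ 3) ^ 2)) * (k * 3) * x t ^ 2
            * (θt t + 1 / 2 * x t * α (1 - x t ^ 2)))
            ≤ lam * (R * (64 / k ^ 2) * (k * 3) * 1 * M) := mul_le_mul_of_nonneg_left e3 hlam.le
        have ek : lam * (R * (64 / k ^ 2) * (k * 3) * 1 * M) ≤ 1 / 2 := by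
          have hkk : lam * (R * (64 / k ^ 2) * (k * 3) * 1 * M) = 192 * (lam * R * M) / k := by
            field_simp
            ring
          rw [hkk, div_le_iff₀ hk0]
          have hlrm : 0 < lam * R * M := by positivity
          rw [hkdef]
          nlinarith only [hlrm]
        have eS2 : lam * (2 * γ) * (3 / 8) ≤ lam * (2 * γ) * (x t * arctan (k * x t ^ 3)) :=
          mul_le_mul_of_nonneg_left hS2 (by positivity)
        have elam : lam * (2 * γ) * (3 / 8) = 2 * (γ + 1) := by
          rw [hlamdef]
          field_simp
        have hγX2 : γ * x t ^ 2 ≤ γ * 1 := mul_le_mul_of_nonneg_left hX2 hγ.le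
        linarith only [hcS4, e1, e3', ek, eS2, elam, hγX2, sq_nonneg (θt t), hρ1, hεC]
      · -- the middle band ε² < x² < (1-ε)²
        have hT1 : |x t * θt t * α (1 - x t ^ 2)| ≤ 1 * R * α1 :=
          bnd_mul (bnd_mul hXa hΘa) (by rw [abs_of_nonneg hA0]; exact hAub)
        have e1 : -(1 * R * α1) ≤ x t * θt t * α (1 - x t ^ 2) := (abs_le.mp hT1).1
        have hT2 : |x t * arctan (k * x t ^ 3)| ≤ 1 * 2 := bnd_mul hXa (harctan2 _)
        have e2 : -(1 * 2) ≤ x t * arctan (k * x t ^ 3) := (abs_le.mp hT2).1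
        have e2' : -(lam * (2 * γ) * (1 * 2)) ≤ lam * (2 * γ) * (x t * arctan (k * x t ^ 3)) := by
          have h := mul_le_mul_of_nonneg_left e2 (show (0:ℝ) ≤ lam * (2 * γ) by positivity)
          linarith only [h]
        have hT3 : |θt t * (1 / (1 + (k * x t ^ 3) ^ 2)) * (k * 3) * x t ^ 2
            * (θt t + 1 / 2 * x t * α (1 - x t ^ 2))| ≤ R * 1 * (k * 3) * 1 * M := by
          refine bnd_mul (bnd_mul (bnd_mul (bnd_mul hΘa hinva) hk3a) ?_) hXDa
          rw [abs_of_nonneg (sq_nonneg (x t))]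
          exact hX2
        have e3 : θt t * (1 / (1 + (k * x t ^ 3) ^ 2)) * (k * 3) * x t ^ 2
            * (θt t + 1 / 2 * x t * α (1 - x t ^ 2)) ≤ R * 1 * (k * 3) * 1 * M :=
          (abs_le.mp hT3).2
        have e3' : lam * (θt t * (1 / (1 + (k * x t ^ 3) ^ 2)) * (k * 3) * x t ^ 2
            * (θt t + 1 / 2 * x t * α (1 - x t ^ 2)))
            ≤ lam * (R * 1 * (k * 3) * 1 * M) := mul_le_mul_of_nonneg_left e3 hlam.le
        have hAlb : α ε ≤ α (1 - x t ^ 2) := hmono (by nlinarith only [hc2, hε0, hεhalf])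
        have hS4lb : ε ^ 2 * α ε ≤ x t ^ 2 * α (1 - x t ^ 2) :=
          mul_le_mul hc1.le hAlb hαε.le (sq_nonneg (x t))
        have ec : c * γ * (ε ^ 2 * α ε) ≤ c * γ * (x t ^ 2 * α (1 - x t ^ 2)) :=
          mul_le_mul_of_nonneg_left hS4lb (by positivity)
        have ecval : c * γ * (ε ^ 2 * α ε)
            = 1 + 2 * γ + R * α1 / 2 + lam * (4 * γ + 3 * k * R * M) := by
          rw [← hcprop]; ring
        have hγX2 : γ * x t ^ 2 ≤ γ * 1 := mul_le_mul_of_nonneg_left hX2 hγ.le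
        linarith only [e1, e2', e3', ec, ecval, hγX2, sq_nonneg (θt t), hρ1]
    refine ⟨_, ?_, hmain⟩
    rw [hZdef]
    refine hZd.congr_deriv ?_
    simp only [Pi.pow_apply, Pi.neg_apply]
    push_cast
    ring
  -- conclude
  obtain ⟨T, hTdef⟩ : ∃ T : ℝ, T = (2 * Zb + 1) / ρ := ⟨_, rfl⟩
  have hT0 : 0 ≤ T := by
    rw [hTdef]
    exact div_nonneg (by linarith) hρ0.le
  have hkey := le_of_deriv_ge hT0 (hZderiv T hT0)
  have hρT : ρ * (T - 0) = 2 * Zb + 1 := by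
    rw [hTdef, sub_zero]
    rw [mul_div_cancel₀ _ hρ0.ne']
  have hZ0 := abs_le.mp (hZbound 0 le_rfl)
  have hZT := abs_le.mp (hZbound T hT0)
  rw [hρT] at hkey
  linarith [hZ0.1, hZT.2, hkey]
end
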